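/- arXiv:1604.04413 — 7 statements merged into one kernel-verified Lean document; each statement's English description precedes it below -/
import Mathlib

section
/- Fix an integer γ with gcd(γ, q) = 1 and u₁ ∈ Z_q. For divisors d₁, d₂ ∈ D_q and residues r₁ ∈ Z_{d₁}, r₂ ∈ Z_{d₂}, define V⁰([r₁]_{d₁}, [r₂]_{d₂} ∣ u₁) := Σ_{u₂ ∈ Z_q} (1/q) · V([r₁]_{d₁} ∣ u₁ + γ·u₂ mod q) · V([r₂]_{d₂} ∣ u₂). Then for every d ∈ D_q and r ∈ Z_d: Σ_{d₁, d₂ ∈ D_q with gcd(d₁,d₂) = d} Σ_{(r₁,r₂) ∈ Z_{d₁} × Z_{d₂} with r₁ − γ·r₂ ≡ r (mod d)} V⁰([r₁]_{d₁}, [r₂]_{d₂} ∣ u₁) equals Σ_{(d₁,d₂) ∈ D_q × D_q, gcd(d₁,d₂) = d} ε_{d₁}·ε_{d₂} if u₁ ≡ r (mod d), and equals 0 otherwise. -/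
open Finset

/-- The generalized erasure channel `V = V_(q)(ε_d : d ∈ D_q)`:
the probability of output symbol `[r]_d` given input `x` is `ε d` if
`x ≡ r (mod d)`, and `0` otherwise. -/
noncomputable def Vch (ε : ℕ → ℝ) (d r : ℕ) (x : ℤ) : ℝ :=
  if x % (d : ℤ) = (r : ℤ) % (d : ℤ) then ε d else 0

/-- The minus polar transform
`V⁰([r₁]_{d₁}, [r₂]_{d₂} ∣ u₁) = Σ_{u₂ ∈ Z_q} (1/q) · V([r₁]_{d₁} ∣ u₁ + γ·u₂ mod q) · V([r₂]_{d₂} ∣ u₂)`. -/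
noncomputable def V0 (q : ℕ) (γ : ℤ) (ε : ℕ → ℝ) (d₁ r₁ d₂ r₂ u₁ : ℕ) : ℝ :=
  ∑ u₂ ∈ range q,
    (1 / (q : ℝ)) * Vch ε d₁ r₁ (((u₁ : ℤ) + γ * (u₂ : ℤ)) % (q : ℤ)) * Vch ε d₂ r₂ (u₂ : ℤ)

lemma stmt1_inner (q : ℕ) (hq : 0 < q) (γ : ℤ) (ε : ℕ → ℝ) (u₁ d r d₁ d₂ : ℕ)
    (h₁ : d₁ ∣ q) (h₁0 : 0 < d₁) (h₂0 : 0 < d₂)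
    (hd₁ : (d : ℤ) ∣ (d₁ : ℤ)) (hd₂ : (d : ℤ) ∣ (d₂ : ℤ)) :
    (∑ r₁ ∈ range d₁, ∑ r₂ ∈ (range d₂).filter
        (fun r₂ : ℕ => ((r₁ : ℤ) - γ * (r₂ : ℤ)) % (d : ℤ) = (r : ℤ) % (d : ℤ)),
      ∑ u₂ ∈ range q,
        (1 / (q : ℝ)) * Vch ε d₁ r₁ (((u₁ : ℤ) + γ * (u₂ : ℤ)) % (q : ℤ)) * Vch ε d₂ r₂ (u₂ : ℤ))
    = if (u₁ : ℤ) % (d : ℤ) = (r : ℤ) % (d : ℤ) then ε d₁ * ε d₂ else 0 := by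
  have key : ∀ u₂ ∈ range q,
      (∑ r₁ ∈ range d₁, ∑ r₂ ∈ (range d₂).filter
          (fun r₂ : ℕ => ((r₁ : ℤ) - γ * (r₂ : ℤ)) % (d : ℤ) = (r : ℤ) % (d : ℤ)),
        (1 / (q : ℝ)) * Vch ε d₁ r₁ (((u₁ : ℤ) + γ * (u₂ : ℤ)) % (q : ℤ)) * Vch ε d₂ r₂ (u₂ : ℤ))
      = if (u₁ : ℤ) % (d : ℤ) = (r : ℤ) % (d : ℤ) then (1 / (q : ℝ)) * (ε d₁ * ε d₂) else 0 := by
    intro u₂ _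
    set a₁ : ℕ := (((u₁ : ℤ) + γ * (u₂ : ℤ)) % (d₁ : ℤ)).toNat with ha₁def
    set a₂ : ℕ := u₂ % d₂ with ha₂def
    have hd₁0 : (d₁ : ℤ) ≠ 0 := by exact_mod_cast h₁0.ne'
    have ha₁ : (a₁ : ℤ) = ((u₁ : ℤ) + γ * (u₂ : ℤ)) % (d₁ : ℤ) :=
      Int.toNat_of_nonneg (Int.emod_nonneg _ hd₁0)
    have ha₂ : (a₂ : ℤ) = (u₂ : ℤ) % (d₂ : ℤ) := by
      simp [ha₂def, Int.natCast_mod]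
    have ha₁mem : a₁ ∈ range d₁ := by
      rw [mem_range]
      have hlt : (0 : ℤ) < (d₁ : ℤ) := by exact_mod_cast h₁0
      have := Int.emod_lt_of_pos ((u₁ : ℤ) + γ * (u₂ : ℤ)) hlt
      omega
    have ha₂mem : a₂ ∈ range d₂ := by
      rw [mem_range]; exact Nat.mod_lt _ h₂0
    have hV1 : ∀ r₁ ∈ range d₁,
        Vch ε d₁ r₁ (((u₁ : ℤ) + γ * (u₂ : ℤ)) % (q : ℤ)) = if r₁ = a₁ then ε d₁ else 0 := by
      intro r₁ hr₁
      rw [mem_range] at hr₁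
      unfold Vch
      have h1 : (((u₁ : ℤ) + γ * (u₂ : ℤ)) % (q : ℤ)) % (d₁ : ℤ)
          = ((u₁ : ℤ) + γ * (u₂ : ℤ)) % (d₁ : ℤ) :=
        Int.emod_emod_of_dvd _ (by exact_mod_cast h₁)
      have h2 : (r₁ : ℤ) % (d₁ : ℤ) = (r₁ : ℤ) :=
        Int.emod_eq_of_lt (by positivity) (by exact_mod_cast hr₁)
      rw [h1, h2, ← ha₁]
      by_cases h : r₁ = a₁
      · simp [h]
      · have : (a₁ : ℤ) ≠ (r₁ : ℤ) := by exact_mod_cast Ne.symm h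
        simp [h, this]
    have hV2 : ∀ r₂ ∈ range d₂,
        Vch ε d₂ r₂ (u₂ : ℤ) = if r₂ = a₂ then ε d₂ else 0 := by
      intro r₂ hr₂
      rw [mem_range] at hr₂
      unfold Vch
      have h2 : (r₂ : ℤ) % (d₂ : ℤ) = (r₂ : ℤ) :=
        Int.emod_eq_of_lt (by positivity) (by exact_mod_cast hr₂)
      rw [h2, ← ha₂]
      by_cases h : r₂ = a₂
      · simp [h]
      · have : (a₂ : ℤ) ≠ (r₂ : ℤ) := by exact_mod_cast Ne.symm h
        simp [h, this]
    have hP : (((a₁ : ℤ) - γ * (a₂ : ℤ)) % (d : ℤ) = (r : ℤ) % (d : ℤ))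
        ↔ ((u₁ : ℤ) % (d : ℤ) = (r : ℤ) % (d : ℤ)) := by
      have e1 : (a₁ : ℤ) % (d : ℤ) = ((u₁ : ℤ) + γ * (u₂ : ℤ)) % (d : ℤ) := by
        rw [ha₁, Int.emod_emod_of_dvd _ hd₁]
      have e2 : (a₂ : ℤ) % (d : ℤ) = (u₂ : ℤ) % (d : ℤ) := by
        rw [ha₂, Int.emod_emod_of_dvd _ hd₂]
      have e3 : ((a₁ : ℤ) - γ * (a₂ : ℤ)) % (d : ℤ)
          = (((u₁ : ℤ) + γ * (u₂ : ℤ)) - γ * (u₂ : ℤ)) % (d : ℤ) :=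
        Int.ModEq.sub e1 (Int.ModEq.mul_left γ e2)
      rw [e3]
      ring_nf
    calc (∑ r₁ ∈ range d₁, ∑ r₂ ∈ (range d₂).filter
          (fun r₂ : ℕ => ((r₁ : ℤ) - γ * (r₂ : ℤ)) % (d : ℤ) = (r : ℤ) % (d : ℤ)),
        (1 / (q : ℝ)) * Vch ε d₁ r₁ (((u₁ : ℤ) + γ * (u₂ : ℤ)) % (q : ℤ)) * Vch ε d₂ r₂ (u₂ : ℤ))
        = ∑ r₁ ∈ range d₁, ∑ r₂ ∈ range d₂,
            if r₂ = a₂ then (if r₁ = a₁ then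
              (if ((a₁ : ℤ) - γ * (a₂ : ℤ)) % (d : ℤ) = (r : ℤ) % (d : ℤ)
                then (1 / (q : ℝ)) * (ε d₁ * ε d₂) else 0) else 0) else 0 := by
          rw [sum_congr rfl fun r₁ hr₁ => sum_filter _ _]
          refine sum_congr rfl fun r₁ hr₁ => sum_congr rfl fun r₂ hr₂ => ?_
          rw [hV1 r₁ hr₁, hV2 r₂ hr₂]
          by_cases e1 : r₁ = a₁ <;> by_cases e2 : r₂ = a₂ <;>
            simp [e1, e2] <;> split_ifs <;> ring
      _ = if ((a₁ : ℤ) - γ * (a₂ : ℤ)) % (d : ℤ) = (r : ℤ) % (d : ℤ)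
            then (1 / (q : ℝ)) * (ε d₁ * ε d₂) else 0 := by
          simp only [sum_ite_eq' (range d₂) a₂, ha₂mem, if_true]
          rw [sum_ite_eq' (range d₁) a₁]
          simp [ha₁mem]
      _ = if (u₁ : ℤ) % (d : ℤ) = (r : ℤ) % (d : ℤ)
            then (1 / (q : ℝ)) * (ε d₁ * ε d₂) else 0 := by rw [if_congr hP rfl rfl]
  -- now sum over u₂
  have swap : (∑ r₁ ∈ range d₁, ∑ r₂ ∈ (range d₂).filter
        (fun r₂ : ℕ => ((r₁ : ℤ) - γ * (r₂ : ℤ)) % (d : ℤ) = (r : ℤ) % (d : ℤ)),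
      ∑ u₂ ∈ range q,
        (1 / (q : ℝ)) * Vch ε d₁ r₁ (((u₁ : ℤ) + γ * (u₂ : ℤ)) % (q : ℤ)) * Vch ε d₂ r₂ (u₂ : ℤ))
      = ∑ u₂ ∈ range q, ∑ r₁ ∈ range d₁, ∑ r₂ ∈ (range d₂).filter
        (fun r₂ : ℕ => ((r₁ : ℤ) - γ * (r₂ : ℤ)) % (d : ℤ) = (r : ℤ) % (d : ℤ)),
        (1 / (q : ℝ)) * Vch ε d₁ r₁ (((u₁ : ℤ) + γ * (u₂ : ℤ)) % (q : ℤ)) * Vch ε d₂ r₂ (u₂ : ℤ) := by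
    rw [sum_congr rfl fun r₁ _ => Finset.sum_comm, Finset.sum_comm]
  rw [swap, sum_congr rfl key, sum_const, card_range, nsmul_eq_mul]
  have hq' : (q : ℝ) ≠ 0 := by positivity
  split_ifs <;> field_simp <;> simp

/-- For every `d ∈ D_q` and `r ∈ Z_d`, the sum of
`V⁰([r₁]_{d₁}, [r₂]_{d₂} ∣ u₁)` over all `d₁, d₂ ∈ D_q` with `gcd(d₁, d₂) = d` and residues
`r₁ ∈ Z_{d₁}`, `r₂ ∈ Z_{d₂}` with `r₁ − γ·r₂ ≡ r (mod d)` equals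
`Σ_{(d₁,d₂) ∈ D_q × D_q, gcd(d₁,d₂) = d} ε_{d₁}·ε_{d₂}` if `u₁ ≡ r (mod d)`, and `0` otherwise. -/
theorem stmt_1 (q : ℕ) (hq : 2 ≤ q) (γ : ℤ) (hγ : Int.gcd γ (q : ℤ) = 1)
    (ε : ℕ → ℝ) (hε : ∀ d ∈ q.divisors, 0 ≤ ε d) (hsum : ∑ d ∈ q.divisors, ε d = 1)
    (u₁ : ℕ) (hu₁ : u₁ ∈ range q) (d : ℕ) (hd : d ∈ q.divisors) (r : ℕ) (hr : r ∈ range d) :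
    (∑ d₁ ∈ q.divisors, ∑ d₂ ∈ q.divisors.filter (fun d₂ => Nat.gcd d₁ d₂ = d),
      ∑ r₁ ∈ range d₁, ∑ r₂ ∈ (range d₂).filter
          (fun r₂ : ℕ => ((r₁ : ℤ) - γ * (r₂ : ℤ)) % (d : ℤ) = (r : ℤ) % (d : ℤ)),
        V0 q γ ε d₁ r₁ d₂ r₂ u₁)
      = if (u₁ : ℤ) % (d : ℤ) = (r : ℤ) % (d : ℤ)
        then ∑ x ∈ (q.divisors ×ˢ q.divisors).filter (fun x => Nat.gcd x.1 x.2 = d),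
          ε x.1 * ε x.2
        else 0 := by
  have hq0 : 0 < q := by omega
  have rhs : (∑ x ∈ (q.divisors ×ˢ q.divisors).filter (fun x => Nat.gcd x.1 x.2 = d),
        ε x.1 * ε x.2)
      = ∑ d₁ ∈ q.divisors, ∑ d₂ ∈ q.divisors.filter (fun d₂ => Nat.gcd d₁ d₂ = d),
        ε d₁ * ε d₂ := by
    rw [sum_filter, Finset.sum_product]
    exact sum_congr rfl fun d₁ _ => (sum_filter _ _).symm
  rw [rhs]
  have step : ∀ d₁ ∈ q.divisors, ∀ d₂ ∈ q.divisors.filter (fun d₂ => Nat.gcd d₁ d₂ = d),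
      (∑ r₁ ∈ range d₁, ∑ r₂ ∈ (range d₂).filter
          (fun r₂ : ℕ => ((r₁ : ℤ) - γ * (r₂ : ℤ)) % (d : ℤ) = (r : ℤ) % (d : ℤ)),
        V0 q γ ε d₁ r₁ d₂ r₂ u₁)
      = if (u₁ : ℤ) % (d : ℤ) = (r : ℤ) % (d : ℤ) then ε d₁ * ε d₂ else 0 := by
    intro d₁ h1 d₂ h2
    rw [mem_filter] at h2
    have hdvd1 : d ∣ d₁ := h2.2 ▸ Nat.gcd_dvd_left d₁ d₂
    have hdvd2 : d ∣ d₂ := h2.2 ▸ Nat.gcd_dvd_right d₁ d₂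
    simpa [V0] using stmt1_inner q hq0 γ ε u₁ d r d₁ d₂
      (Nat.dvd_of_mem_divisors h1) (Nat.pos_of_mem_divisors h1)
      (Nat.pos_of_mem_divisors h2.1) (by exact_mod_cast hdvd1) (by exact_mod_cast hdvd2)
  rw [sum_congr rfl fun d₁ h1 => sum_congr rfl (step d₁ h1)]
  by_cases h : (u₁ : ℤ) % (d : ℤ) = (r : ℤ) % (d : ℤ) <;> simp [h]
end

section
/- Fix an integer γ with gcd(γ, q) = 1 and u₂ ∈ Z_q. For divisors d₁, d₂ ∈ D_q, residues r₁ ∈ Z_{d₁}, r₂ ∈ Z_{d₂}, and u₁ ∈ Z_q, define V¹([r₁]_{d₁}, [r₂]_{d₂}, u₁ ∣ u₂) := (1/q) · V([r₁]_{d₁} ∣ u₁ + γ·u₂ mod q) · V([r₂]_{d₂} ∣ u₂). Then for every d ∈ D_q and r ∈ Z_d: Σ_{d₁, d₂ ∈ D_q with lcm(d₁,d₂) = d} Σ_{(u₁,r₁,r₂) ∈ Z_q × Z_{d₁} × Z_{d₂} with r₁ − u₁ ≡ γ·r (mod d₁) and r₂ ≡ r (mod d₂)} V¹([r₁]_{d₁},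 [r₂]_{d₂}, u₁ ∣ u₂) equals Σ_{(d₁,d₂) ∈ D_q × D_q, lcm(d₁,d₂) = d} ε_{d₁}·ε_{d₂} if u₂ ≡ r (mod d), and equals 0 otherwise. -/
open Finset

/-- The plus polar transform
`V¹([r₁]_{d₁}, [r₂]_{d₂}, u₁ ∣ u₂) = (1/q) · V([r₁]_{d₁} ∣ u₁ + γ·u₂ mod q) · V([r₂]_{d₂} ∣ u₂)`. -/
noncomputable def V1 (q : ℕ) (γ : ℤ) (ε : ℕ → ℝ) (d₁ r₁ d₂ r₂ u₁ u₂ : ℕ) : ℝ :=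
  (1 / (q : ℝ)) * Vch ε d₁ r₁ (((u₁ : ℤ) + γ * (u₂ : ℤ)) % (q : ℤ)) * Vch ε d₂ r₂ (u₂ : ℤ)

/-- Summing `Vch ε m · x` over the unique residue `s ∈ range m` congruent to `c` mod `m`
gives `ε m` iff `x ≡ c (mod m)`. -/
lemma key_sum (ε : ℕ → ℝ) (m : ℕ) (hm : 0 < m) (c x : ℤ) :
    ∑ s ∈ (range m).filter (fun s : ℕ => (s : ℤ) % (m : ℤ) = c % (m : ℤ)),
      Vch ε m s x = if x % (m : ℤ) = c % (m : ℤ) then ε m else 0 := by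
  have hmz : (m : ℤ) ≠ 0 := by exact_mod_cast hm.ne'
  have hnn : 0 ≤ c % (m : ℤ) := Int.emod_nonneg c hmz
  have hlt : c % (m : ℤ) < (m : ℤ) := Int.emod_lt_of_pos c (by exact_mod_cast hm)
  have hcast : (((c % (m : ℤ)).toNat : ℤ)) % (m : ℤ) = c % (m : ℤ) := by
    rw [Int.toNat_of_nonneg hnn, Int.emod_emod_of_dvd c dvd_rfl]
  have hfilter : (range m).filter (fun s : ℕ => (s : ℤ) % (m : ℤ) = c % (m : ℤ))
      = {(c % (m : ℤ)).toNat} := by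
    ext s
    simp only [mem_filter, mem_range, mem_singleton]
    constructor
    · rintro ⟨hs, h⟩
      have hsm : (s : ℤ) % (m : ℤ) = (s : ℤ) :=
        Int.emod_eq_of_lt (by positivity) (by exact_mod_cast hs)
      omega
    · rintro rfl
      exact ⟨by omega, hcast⟩
  rw [hfilter, Finset.sum_singleton]
  unfold Vch
  rw [hcast]

lemma gcd_of_dvd (γ : ℤ) (q : ℕ) (hγ : Int.gcd γ (q : ℤ) = 1) (m : ℕ) (hmq : m ∣ q) :
    Int.gcd γ (m : ℤ) = 1 := by
  have h1 : (↑(Int.gcd γ (m : ℤ)) : ℤ) ∣ γ := Int.gcd_dvd_left γ (m : ℤ)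
  have h2 : (↑(Int.gcd γ (m : ℤ)) : ℤ) ∣ (q : ℤ) :=
    (Int.gcd_dvd_right γ (m : ℤ)).trans (Int.natCast_dvd_natCast.mpr hmq)
  have h3 := Int.dvd_coe_gcd h1 h2
  rw [hγ] at h3
  exact Nat.dvd_one.mp (by exact_mod_cast h3)

/-- Cancel a coprime factor in an integer congruence. -/
lemma cancel_coprime {γ : ℤ} {m : ℕ} (hm : 0 < m) (hcop : Int.gcd γ (m : ℤ) = 1)
    {a b : ℤ} (h : γ * a ≡ γ * b [ZMOD (m : ℤ)]) : a ≡ b [ZMOD (m : ℤ)] := by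
  have hmpos : (0 : ℤ) < (m : ℤ) := by exact_mod_cast hm
  have := Int.ModEq.cancel_left_div_gcd hmpos h
  rwa [Int.gcd_comm, hcop, Nat.cast_one, Int.ediv_one] at this

/-- For every `d ∈ D_q` and `r ∈ Z_d`, the sum of `V¹([r₁]_{d₁}, [r₂]_{d₂}, u₁ ∣ u₂)` over all
`d₁, d₂ ∈ D_q` with `lcm(d₁, d₂) = d` and all `(u₁, r₁, r₂) ∈ Z_q × Z_{d₁} × Z_{d₂}` with
`r₁ − u₁ ≡ γ·r (mod d₁)` and `r₂ ≡ r (mod d₂)` equals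
`Σ_{(d₁,d₂) ∈ D_q × D_q, lcm(d₁,d₂) = d} ε_{d₁}·ε_{d₂}` if `u₂ ≡ r (mod d)`, and `0` otherwise. -/
theorem stmt_2 (q : ℕ) (hq : 2 ≤ q) (γ : ℤ) (hγ : Int.gcd γ (q : ℤ) = 1)
    (ε : ℕ → ℝ) (hε : ∀ d ∈ q.divisors, 0 ≤ ε d) (hsum : ∑ d ∈ q.divisors, ε d = 1)
    (u₂ : ℕ) (hu₂ : u₂ ∈ range q) (d : ℕ) (hd : d ∈ q.divisors) (r : ℕ) (hr : r ∈ range d) :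
    (∑ d₁ ∈ q.divisors, ∑ d₂ ∈ q.divisors.filter (fun d₂ => Nat.lcm d₁ d₂ = d),
      ∑ u₁ ∈ range q,
        ∑ r₁ ∈ (range d₁).filter
            (fun r₁ : ℕ => ((r₁ : ℤ) - (u₁ : ℤ)) % (d₁ : ℤ) = (γ * (r : ℤ)) % (d₁ : ℤ)),
          ∑ r₂ ∈ (range d₂).filter
              (fun r₂ : ℕ => (r₂ : ℤ) % (d₂ : ℤ) = (r : ℤ) % (d₂ : ℤ)),
            V1 q γ ε d₁ r₁ d₂ r₂ u₁ u₂)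
      = if (u₂ : ℤ) % (d : ℤ) = (r : ℤ) % (d : ℤ)
        then ∑ x ∈ (q.divisors ×ˢ q.divisors).filter (fun x => Nat.lcm x.1 x.2 = d),
          ε x.1 * ε x.2
        else 0 := by
  have hq0 : (q : ℝ) ≠ 0 := by positivity
  -- Step 1: evaluate the inner triple sum for fixed d₁, d₂ with lcm d₁ d₂ = d.
  have main : ∀ d₁ ∈ q.divisors, ∀ d₂ ∈ q.divisors, Nat.lcm d₁ d₂ = d →
      (∑ u₁ ∈ range q,
        ∑ r₁ ∈ (range d₁).filter
            (fun r₁ : ℕ => ((r₁ : ℤ) - (u₁ : ℤ)) % (d₁ : ℤ) = (γ * (r : ℤ)) % (d₁ : ℤ)),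
          ∑ r₂ ∈ (range d₂).filter
              (fun r₂ : ℕ => (r₂ : ℤ) % (d₂ : ℤ) = (r : ℤ) % (d₂ : ℤ)),
            V1 q γ ε d₁ r₁ d₂ r₂ u₁ u₂)
      = if (u₂ : ℤ) % (d : ℤ) = (r : ℤ) % (d : ℤ) then ε d₁ * ε d₂ else 0 := by
    intro d₁ hd₁ d₂ hd₂ hlcm
    have hd₁pos : 0 < d₁ := Nat.pos_of_mem_divisors hd₁
    have hd₂pos : 0 < d₂ := Nat.pos_of_mem_divisors hd₂
    have hd₁q : d₁ ∣ q := (Nat.mem_divisors.mp hd₁).1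
    have hd₂q : d₂ ∣ q := (Nat.mem_divisors.mp hd₂).1
    have hcop : Int.gcd γ (d₁ : ℤ) = 1 := gcd_of_dvd γ q hγ d₁ hd₁q
    have inner : ∀ u₁ : ℕ,
        (∑ r₁ ∈ (range d₁).filter
            (fun r₁ : ℕ => ((r₁ : ℤ) - (u₁ : ℤ)) % (d₁ : ℤ) = (γ * (r : ℤ)) % (d₁ : ℤ)),
          ∑ r₂ ∈ (range d₂).filter
              (fun r₂ : ℕ => (r₂ : ℤ) % (d₂ : ℤ) = (r : ℤ) % (d₂ : ℤ)),
            V1 q γ ε d₁ r₁ d₂ r₂ u₁ u₂)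
        = (1 / (q : ℝ)) *
          (if (u₂ : ℤ) % (d : ℤ) = (r : ℤ) % (d : ℤ) then ε d₁ * ε d₂ else 0) := by
      intro u₁
      -- rewrite the r₁-filter condition into the canonical form
      have hfc : (range d₁).filter
            (fun r₁ : ℕ => ((r₁ : ℤ) - (u₁ : ℤ)) % (d₁ : ℤ) = (γ * (r : ℤ)) % (d₁ : ℤ))
          = (range d₁).filter
            (fun r₁ : ℕ => (r₁ : ℤ) % (d₁ : ℤ) = ((u₁ : ℤ) + γ * (r : ℤ)) % (d₁ : ℤ)) := by
        apply Finset.filter_congr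
        intro s _
        constructor
        · intro h
          have h' : (s : ℤ) - (u₁ : ℤ) ≡ γ * (r : ℤ) [ZMOD (d₁ : ℤ)] := h
          have := h'.add_right (u₁ : ℤ)
          simpa [sub_add_cancel, add_comm, Int.ModEq] using this
        · intro h
          have h' : (s : ℤ) ≡ (u₁ : ℤ) + γ * (r : ℤ) [ZMOD (d₁ : ℤ)] := h
          have := h'.sub_right (u₁ : ℤ)
          simpa [add_comm, add_sub_cancel_left, Int.ModEq] using this
      rw [hfc]
      simp only [V1]
      rw [Finset.sum_comm]
      -- factor the double sum
      have hfac :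
          (∑ r₂ ∈ (range d₂).filter
              (fun r₂ : ℕ => (r₂ : ℤ) % (d₂ : ℤ) = (r : ℤ) % (d₂ : ℤ)),
            ∑ r₁ ∈ (range d₁).filter
              (fun r₁ : ℕ => (r₁ : ℤ) % (d₁ : ℤ) = ((u₁ : ℤ) + γ * (r : ℤ)) % (d₁ : ℤ)),
              (1 / (q : ℝ)) * Vch ε d₁ r₁ (((u₁ : ℤ) + γ * (u₂ : ℤ)) % (q : ℤ)) *
                Vch ε d₂ r₂ (u₂ : ℤ))
          = (1 / (q : ℝ)) *
            ((∑ r₁ ∈ (range d₁).filter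
              (fun r₁ : ℕ => (r₁ : ℤ) % (d₁ : ℤ) = ((u₁ : ℤ) + γ * (r : ℤ)) % (d₁ : ℤ)),
                Vch ε d₁ r₁ (((u₁ : ℤ) + γ * (u₂ : ℤ)) % (q : ℤ))) *
             (∑ r₂ ∈ (range d₂).filter
              (fun r₂ : ℕ => (r₂ : ℤ) % (d₂ : ℤ) = (r : ℤ) % (d₂ : ℤ)),
                Vch ε d₂ r₂ (u₂ : ℤ))) := by
        rw [Finset.sum_comm, Finset.sum_mul_sum, Finset.mul_sum]
        refine Finset.sum_congr rfl fun r₁ _ => ?_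
        rw [Finset.mul_sum]
        exact Finset.sum_congr rfl fun r₂ _ => by ring
      rw [hfac, key_sum ε d₁ hd₁pos _ _, key_sum ε d₂ hd₂pos _ _]
      congr 1
      -- now identify the two if-conditions with the single lcm condition
      have hqd : (d₁ : ℤ) ∣ (q : ℤ) := Int.natCast_dvd_natCast.mpr hd₁q
      have e1 : (((u₁ : ℤ) + γ * (u₂ : ℤ)) % (q : ℤ)) % (d₁ : ℤ)
          = ((u₁ : ℤ) + γ * (u₂ : ℤ)) % (d₁ : ℤ) :=
        Int.emod_emod_of_dvd _ hqd
      have h1 : ((((u₁ : ℤ) + γ * (u₂ : ℤ)) % (q : ℤ)) % (d₁ : ℤ)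
          = ((u₁ : ℤ) + γ * (r : ℤ)) % (d₁ : ℤ))
          ↔ ((u₂ : ℤ) % (d₁ : ℤ) = (r : ℤ) % (d₁ : ℤ)) := by
        rw [e1]
        constructor
        · intro h
          have h' : (u₁ : ℤ) + γ * (u₂ : ℤ) ≡ (u₁ : ℤ) + γ * (r : ℤ) [ZMOD (d₁ : ℤ)] := h
          have h'' := Int.ModEq.add_left_cancel' (u₁ : ℤ) h'
          exact cancel_coprime hd₁pos hcop h''
        · intro h
          have h' : (u₂ : ℤ) ≡ (r : ℤ) [ZMOD (d₁ : ℤ)] := h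
          exact Int.ModEq.add_left _ (h'.mul_left γ)
      have hdlcm : ∀ x : ℤ, ((d : ℤ) ∣ x) ↔ (((d₁ : ℤ) ∣ x) ∧ ((d₂ : ℤ) ∣ x)) := by
        intro x
        constructor
        · intro h
          exact ⟨(Int.natCast_dvd_natCast.mpr (hlcm ▸ Nat.dvd_lcm_left d₁ d₂)).trans h,
                 (Int.natCast_dvd_natCast.mpr (hlcm ▸ Nat.dvd_lcm_right d₁ d₂)).trans h⟩
        · rintro ⟨h1, h2⟩
          have := Int.coe_lcm_dvd h1 h2
          have hl : Int.lcm (d₁ : ℤ) (d₂ : ℤ) = d := by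
            simp [Int.lcm, Int.natAbs_natCast, hlcm]
          rwa [hl] at this
      have hsplit : ((u₂ : ℤ) % (d : ℤ) = (r : ℤ) % (d : ℤ))
          ↔ (((u₂ : ℤ) % (d₁ : ℤ) = (r : ℤ) % (d₁ : ℤ)) ∧
             ((u₂ : ℤ) % (d₂ : ℤ) = (r : ℤ) % (d₂ : ℤ))) := by
        rw [show ((u₂ : ℤ) % (d : ℤ) = (r : ℤ) % (d : ℤ)) ↔ (u₂ : ℤ) ≡ (r : ℤ) [ZMOD (d : ℤ)]
              from Iff.rfl,
            show ((u₂ : ℤ) % (d₁ : ℤ) = (r : ℤ) % (d₁ : ℤ)) ↔ (u₂ : ℤ) ≡ (r : ℤ) [ZMOD (d₁ : ℤ)]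
              from Iff.rfl,
            show ((u₂ : ℤ) % (d₂ : ℤ) = (r : ℤ) % (d₂ : ℤ)) ↔ (u₂ : ℤ) ≡ (r : ℤ) [ZMOD (d₂ : ℤ)]
              from Iff.rfl,
            Int.modEq_iff_dvd, Int.modEq_iff_dvd, Int.modEq_iff_dvd]
        exact hdlcm _
      by_cases hC : (u₂ : ℤ) % (d : ℤ) = (r : ℤ) % (d : ℤ)
      · obtain ⟨hC1, hC2⟩ := hsplit.mp hC
        rw [if_pos (h1.mpr hC1), if_pos hC2, if_pos hC]
      · rw [if_neg hC]
        by_cases hC1 : (u₂ : ℤ) % (d₁ : ℤ) = (r : ℤ) % (d₁ : ℤ)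
        · have hC2 : ¬ ((u₂ : ℤ) % (d₂ : ℤ) = (r : ℤ) % (d₂ : ℤ)) := by
            intro hC2
            exact hC (hsplit.mpr ⟨hC1, hC2⟩)
          rw [if_neg hC2, mul_zero]
        · rw [if_neg (fun h => hC1 (h1.mp h)), zero_mul]
    rw [Finset.sum_congr rfl (fun u₁ _ => inner u₁), Finset.sum_const, Finset.card_range,
        nsmul_eq_mul]
    rw [← mul_assoc]
    field_simp
  -- Step 2: sum over d₁, d₂.
  have step2 : (∑ d₁ ∈ q.divisors, ∑ d₂ ∈ q.divisors.filter (fun d₂ => Nat.lcm d₁ d₂ = d),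
      ∑ u₁ ∈ range q,
        ∑ r₁ ∈ (range d₁).filter
            (fun r₁ : ℕ => ((r₁ : ℤ) - (u₁ : ℤ)) % (d₁ : ℤ) = (γ * (r : ℤ)) % (d₁ : ℤ)),
          ∑ r₂ ∈ (range d₂).filter
              (fun r₂ : ℕ => (r₂ : ℤ) % (d₂ : ℤ) = (r : ℤ) % (d₂ : ℤ)),
            V1 q γ ε d₁ r₁ d₂ r₂ u₁ u₂)
      = ∑ d₁ ∈ q.divisors, ∑ d₂ ∈ q.divisors.filter (fun d₂ => Nat.lcm d₁ d₂ = d),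
          (if (u₂ : ℤ) % (d : ℤ) = (r : ℤ) % (d : ℤ) then ε d₁ * ε d₂ else 0) := by
    apply Finset.sum_congr rfl
    intro d₁ hd₁
    apply Finset.sum_congr rfl
    intro d₂ hd₂
    exact main d₁ hd₁ d₂ (Finset.mem_filter.mp hd₂).1 (Finset.mem_filter.mp hd₂).2
  rw [step2]
  have hprod : ∑ x ∈ (q.divisors ×ˢ q.divisors).filter (fun x => Nat.lcm x.1 x.2 = d),
      ε x.1 * ε x.2
      = ∑ d₁ ∈ q.divisors, ∑ d₂ ∈ q.divisors.filter (fun d₂ => Nat.lcm d₁ d₂ = d),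
          ε d₁ * ε d₂ := by
    rw [Finset.sum_filter, Finset.sum_product]
    apply Finset.sum_congr rfl
    intro d₁ _
    rw [Finset.sum_filter]
  by_cases hC : (u₂ : ℤ) % (d : ℤ) = (r : ℤ) % (d : ℤ)
  · rw [if_pos hC, hprod]
    exact Finset.sum_congr rfl fun d₁ _ => Finset.sum_congr rfl fun d₂ _ => if_pos hC
  · rw [if_neg hC]
    simp [if_neg hC]
end

section
/- Let q = p^m be a prime power (p prime, m ≥ 1) and let (ε_d : d ∈ D_q) be a probability vector on the set D_q of positive divisors of q. Then for every d ∈ D_q, ε_d^− + ε_d^+ = 2·ε_d. -/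
open Finset

/-- `ε_d^− := Σ_{(d₁,d₂) ∈ D_q × D_q, gcd(d₁,d₂) = d} ε_{d₁}·ε_{d₂}`. -/
noncomputable def epsMinus (q : ℕ) (ε : ℕ → ℝ) (d : ℕ) : ℝ :=
  ∑ x ∈ (q.divisors ×ˢ q.divisors).filter (fun x => Nat.gcd x.1 x.2 = d), ε x.1 * ε x.2

/-- `ε_d^+ := Σ_{(d₁,d₂) ∈ D_q × D_q, lcm(d₁,d₂) = d} ε_{d₁}·ε_{d₂}`. -/
noncomputable def epsPlus (q : ℕ) (ε : ℕ → ℝ) (d : ℕ) : ℝ :=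
  ∑ x ∈ (q.divisors ×ˢ q.divisors).filter (fun x => Nat.lcm x.1 x.2 = d), ε x.1 * ε x.2

/-- Let `q = p^m` be a prime power and `(ε_d : d ∈ D_q)` a probability vector on the
positive divisors of `q`.  Then for every `d ∈ D_q`, `ε_d^− + ε_d^+ = 2·ε_d`. -/
theorem stmt_5 (p m q : ℕ) (hp : p.Prime) (hm : 1 ≤ m) (hq : q = p ^ m)
    (ε : ℕ → ℝ) (hε : ∀ d ∈ q.divisors, 0 ≤ ε d) (hsum : ∑ d ∈ q.divisors, ε d = 1)
    (d : ℕ) (hd : d ∈ q.divisors) :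
    epsMinus q ε d + epsPlus q ε d = 2 * ε d := by
  have key : ∀ x ∈ q.divisors ×ˢ q.divisors,
      ((if Nat.gcd x.1 x.2 = d then ε x.1 * ε x.2 else 0) +
       (if Nat.lcm x.1 x.2 = d then ε x.1 * ε x.2 else 0)) =
      ((if x.1 = d then ε x.1 * ε x.2 else 0) +
       (if x.2 = d then ε x.1 * ε x.2 else 0)) := by
    rintro ⟨a, b⟩ hx
    simp only [Finset.mem_product, Nat.mem_divisors, hq] at hx
    obtain ⟨⟨ha, _⟩, ⟨hb, _⟩⟩ := hx
    obtain ⟨i, hi, rfl⟩ := (Nat.dvd_prime_pow hp).mp ha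
    obtain ⟨j, hj, rfl⟩ := (Nat.dvd_prime_pow hp).mp hb
    rcases le_total i j with h | h
    · have hdvd : p ^ i ∣ p ^ j := pow_dvd_pow p h
      have hl : Nat.lcm (p ^ i) (p ^ j) = p ^ j :=
        Nat.dvd_antisymm (Nat.lcm_dvd hdvd dvd_rfl) (Nat.dvd_lcm_right _ _)
      rw [Nat.gcd_eq_left hdvd, hl]
    · have hdvd : p ^ j ∣ p ^ i := pow_dvd_pow p h
      have hl : Nat.lcm (p ^ i) (p ^ j) = p ^ i :=
        Nat.dvd_antisymm (Nat.lcm_dvd dvd_rfl hdvd) (Nat.dvd_lcm_left _ _)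
      rw [Nat.gcd_eq_right hdvd, hl]
      ring_nf
  have h1 : epsMinus q ε d + epsPlus q ε d =
      ∑ x ∈ q.divisors ×ˢ q.divisors,
        ((if x.1 = d then ε x.1 * ε x.2 else 0) +
         (if x.2 = d then ε x.1 * ε x.2 else 0)) := by
    rw [epsMinus, epsPlus, Finset.sum_filter, Finset.sum_filter, ← Finset.sum_add_distrib]
    exact Finset.sum_congr rfl key
  rw [h1, Finset.sum_add_distrib]
  have h2 : (∑ x ∈ q.divisors ×ˢ q.divisors,
      if x.1 = d then ε x.1 * ε x.2 else 0) = ε d := by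
    rw [Finset.sum_product]
    rw [Finset.sum_eq_single d]
    · simp [← Finset.mul_sum, hsum]
    · intro b hb hbd
      simp [hbd]
    · intro h; exact absurd hd h
  have h3 : (∑ x ∈ q.divisors ×ˢ q.divisors,
      if x.2 = d then ε x.1 * ε x.2 else 0) = ε d := by
    rw [Finset.sum_product_right]
    rw [Finset.sum_eq_single d]
    · simp [← Finset.sum_mul, hsum]
    · intro b hb hbd
      simp [hbd]
    · intro h; exact absurd hd h
  rw [h2, h3]; ring
end

section
/- Let q = p^m be a prime power (p prime, m ≥ 1), let (ε_d : d ∈ D_q) be a probability vector on the set D_q of positive divisors of q, and define F_α(w) := (α/(α−1)) · ln( Σ_{d ∈ D_q} w_d · d^{(α−1)/α} ) for a nonnegative family (w_d : d ∈ D_q) with positive sum. Then for every real α with 0 < α < 1, F_α(ε^−) + F_α(ε^+) ≥ 2 · F_α(ε). -/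
open Finset

/-- `F_α(w) := (α/(α−1)) · ln(Σ_{d ∈ D_q} w_d · d^{(α−1)/α})`. -/
noncomputable def Fa (q : ℕ) (α : ℝ) (w : ℕ → ℝ) : ℝ :=
  (α / (α - 1)) * Real.log (∑ d ∈ q.divisors, w d * (d : ℝ) ^ ((α - 1) / α))

/-- Let `q = p^m` be a prime power and `(ε_d : d ∈ D_q)` a probability vector on the
positive divisors of `q`.  Then for every real `α` with `0 < α < 1`,
`F_α(ε^−) + F_α(ε^+) ≥ 2·F_α(ε)`. -/
theorem stmt_11 (p m q : ℕ) (hp : p.Prime) (hm : 1 ≤ m) (hq : q = p ^ m)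
    (ε : ℕ → ℝ) (hε : ∀ d ∈ q.divisors, 0 ≤ ε d) (hsum : ∑ d ∈ q.divisors, ε d = 1)
    (α : ℝ) (hα0 : 0 < α) (hα1 : α < 1) :
    Fa q α (epsMinus q ε) + Fa q α (epsPlus q ε) ≥ 2 * Fa q α ε := by
  have hq0 : q ≠ 0 := by subst hq; exact pow_ne_zero _ hp.pos.ne'
  set e : ℝ := (α - 1) / α with he_def
  have he : e ≤ 0 := le_of_lt (div_neg_of_neg_of_pos (by linarith) hα0)
  set f : ℕ → ℝ := fun d => (d : ℝ) ^ e with hf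
  set s := q.divisors with hs
  -- basic facts about f on divisors
  have hfq : 0 < f q := Real.rpow_pos_of_pos (by exact_mod_cast Nat.pos_of_ne_zero hq0) e
  have hfge : ∀ d ∈ s, f q ≤ f d := by
    intro d hd
    have hd1 : 0 < d := Nat.pos_of_mem_divisors hd
    have hdq : d ≤ q := Nat.le_of_dvd (Nat.pos_of_ne_zero hq0) (Nat.dvd_of_mem_divisors hd)
    exact Real.rpow_le_rpow_of_nonpos (by exact_mod_cast hd1) (by exact_mod_cast hdq) he
  have hpair : ∀ x ∈ s ×ˢ s, 0 ≤ ε x.1 * ε x.2 := by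
    intro x hx
    rw [Finset.mem_product] at hx
    exact mul_nonneg (hε _ hx.1) (hε _ hx.2)
  have hps : ∑ x ∈ s ×ˢ s, ε x.1 * ε x.2 = 1 := by
    rw [Finset.sum_product]
    calc ∑ d1 ∈ s, ∑ d2 ∈ s, ε d1 * ε d2
        = ∑ d1 ∈ s, ε d1 * ∑ d2 ∈ s, ε d2 := by
          exact Finset.sum_congr rfl fun d1 _ => (Finset.mul_sum _ _ _).symm
      _ = 1 := by rw [hsum]; simp [hsum]
  -- fiberwise summation lemma
  have key : ∀ h : ℕ × ℕ → ℕ, (∀ x ∈ s ×ˢ s, h x ∈ s) →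
      (∑ d ∈ s, (∑ x ∈ (s ×ˢ s).filter (fun x => h x = d), ε x.1 * ε x.2) * f d)
        = ∑ x ∈ s ×ˢ s, ε x.1 * ε x.2 * f (h x) := by
    intro h hh
    rw [← Finset.sum_fiberwise_of_maps_to hh (fun x => ε x.1 * ε x.2 * f (h x))]
    refine Finset.sum_congr rfl fun d _ => ?_
    rw [Finset.sum_mul]
    refine Finset.sum_congr rfl fun x hx => ?_
    rw [(Finset.mem_filter.mp hx).2]
  have hgcd_mem : ∀ x ∈ s ×ˢ s, Nat.gcd x.1 x.2 ∈ s := by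
    intro x hx
    rw [Finset.mem_product] at hx
    exact Nat.mem_divisors.mpr
      ⟨dvd_trans (Nat.gcd_dvd_left _ _) (Nat.dvd_of_mem_divisors hx.1), hq0⟩
  have hlcm_mem : ∀ x ∈ s ×ˢ s, Nat.lcm x.1 x.2 ∈ s := by
    intro x hx
    rw [Finset.mem_product] at hx
    exact Nat.mem_divisors.mpr
      ⟨Nat.lcm_dvd (Nat.dvd_of_mem_divisors hx.1) (Nat.dvd_of_mem_divisors hx.2), hq0⟩
  set TM := ∑ x ∈ s ×ˢ s, ε x.1 * ε x.2 * f (Nat.gcd x.1 x.2) with hTM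
  set TP := ∑ x ∈ s ×ˢ s, ε x.1 * ε x.2 * f (Nat.lcm x.1 x.2) with hTP
  set T := ∑ d ∈ s, ε d * f d with hT
  -- pointwise identity on prime-power divisors
  have hpoint : ∀ x ∈ s ×ˢ s, f (Nat.gcd x.1 x.2) + f (Nat.lcm x.1 x.2) = f x.1 + f x.2 := by
    intro x hx
    rw [Finset.mem_product] at hx
    have h1 : x.1 ∣ p ^ m := hq ▸ Nat.dvd_of_mem_divisors hx.1
    have h2 : x.2 ∣ p ^ m := hq ▸ Nat.dvd_of_mem_divisors hx.2
    obtain ⟨a, -, ha⟩ := (Nat.dvd_prime_pow hp).mp h1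
    obtain ⟨b, -, hb⟩ := (Nat.dvd_prime_pow hp).mp h2
    rcases le_total a b with hab | hab
    · have hd : x.1 ∣ x.2 := by rw [ha, hb]; exact pow_dvd_pow p hab
      rw [Nat.gcd_eq_left hd,
        Nat.dvd_antisymm (Nat.lcm_dvd hd dvd_rfl) (Nat.dvd_lcm_right _ _)]
    · have hd : x.2 ∣ x.1 := by rw [ha, hb]; exact pow_dvd_pow p hab
      rw [Nat.gcd_eq_right hd,
        Nat.dvd_antisymm (Nat.lcm_dvd dvd_rfl hd) (Nat.dvd_lcm_left _ _)]
      ring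
  -- TM + TP = 2T
  have hmarg1 : ∑ x ∈ s ×ˢ s, ε x.1 * ε x.2 * f x.1 = T := by
    rw [Finset.sum_product]
    calc ∑ d1 ∈ s, ∑ d2 ∈ s, ε d1 * ε d2 * f d1
        = ∑ d1 ∈ s, (ε d1 * f d1) * ∑ d2 ∈ s, ε d2 := by
          refine Finset.sum_congr rfl fun d1 _ => ?_
          rw [Finset.mul_sum]
          exact Finset.sum_congr rfl fun d2 _ => by ring
      _ = T := by rw [hsum]; simp [hT]
  have hmarg2 : ∑ x ∈ s ×ˢ s, ε x.1 * ε x.2 * f x.2 = T := by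
    rw [Finset.sum_product]
    calc ∑ d1 ∈ s, ∑ d2 ∈ s, ε d1 * ε d2 * f d2
        = ∑ d1 ∈ s, ε d1 * ∑ d2 ∈ s, ε d2 * f d2 := by
          refine Finset.sum_congr rfl fun d1 _ => ?_
          rw [Finset.mul_sum]
          exact Finset.sum_congr rfl fun d2 _ => by ring
      _ = T := by rw [← hT, ← Finset.sum_mul, hsum, one_mul]
  have hsum2 : TM + TP = 2 * T := by
    rw [hTM, hTP, ← Finset.sum_add_distrib]
    calc ∑ x ∈ s ×ˢ s, (ε x.1 * ε x.2 * f (Nat.gcd x.1 x.2) + ε x.1 * ε x.2 * f (Nat.lcm x.1 x.2))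
        = ∑ x ∈ s ×ˢ s, (ε x.1 * ε x.2 * f x.1 + ε x.1 * ε x.2 * f x.2) := by
          refine Finset.sum_congr rfl fun x hx => ?_
          rw [← mul_add, ← mul_add, hpoint x hx]
      _ = 2 * T := by rw [Finset.sum_add_distrib, hmarg1, hmarg2]; ring
  -- positivity
  have hTMpos : 0 < TM := by
    have : f q * 1 ≤ TM := by
      rw [← hps, Finset.mul_sum, hTM]
      refine Finset.sum_le_sum fun x hx => ?_
      calc f q * (ε x.1 * ε x.2) = (ε x.1 * ε x.2) * f q := by ring
        _ ≤ ε x.1 * ε x.2 * f (Nat.gcd x.1 x.2) :=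
            mul_le_mul_of_nonneg_left (hfge _ (hgcd_mem x hx)) (hpair x hx)
    linarith
  have hTPpos : 0 < TP := by
    have : f q * 1 ≤ TP := by
      rw [← hps, Finset.mul_sum, hTP]
      refine Finset.sum_le_sum fun x hx => ?_
      calc f q * (ε x.1 * ε x.2) = (ε x.1 * ε x.2) * f q := by ring
        _ ≤ ε x.1 * ε x.2 * f (Nat.lcm x.1 x.2) :=
            mul_le_mul_of_nonneg_left (hfge _ (hlcm_mem x hx)) (hpair x hx)
    linarith
  have hTpos : 0 < T := by linarith
  -- rewrite the three Fa values
  have hFaM : Fa q α (epsMinus q ε) = (α / (α - 1)) * Real.log TM := by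
    rw [Fa, hTM, ← key _ hgcd_mem]; rfl
  have hFaP : Fa q α (epsPlus q ε) = (α / (α - 1)) * Real.log TP := by
    rw [Fa, hTP, ← key _ hlcm_mem]; rfl
  have hFaE : Fa q α ε = (α / (α - 1)) * Real.log T := by rw [Fa, hT]
  rw [hFaM, hFaP, hFaE]
  have hc : α / (α - 1) ≤ 0 := le_of_lt (div_neg_of_pos_of_neg hα0 (by linarith))
  have hlog : Real.log TM + Real.log TP ≤ 2 * Real.log T := by
    have hmul : TM * TP ≤ T ^ 2 := by nlinarith [sq_nonneg (TM - TP)]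
    have := Real.log_le_log (by positivity : (0:ℝ) < TM * TP) hmul
    rw [Real.log_mul hTMpos.ne' hTPpos.ne'] at this
    rwa [Real.log_pow, Nat.cast_ofNat] at this
  have := mul_le_mul_of_nonpos_left hlog hc
  nlinarith [this]
end

section
/- Let q = p^m be a prime power (p prime, m ≥ 1) and let (ε_d : d ∈ D_q) be a probability vector on the set D_q of positive divisors of q. Then ln( Σ_{d ∈ D_q} ε_d^− · d ) + ln( Σ_{d ∈ D_q} ε_d^+ · d ) ≤ 2 · ln( Σ_{d ∈ D_q} ε_d · d ). -/
open Finset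

lemma fiber_sum (q : ℕ) (ε : ℕ → ℝ) (f : ℕ × ℕ → ℕ)
    (hf : ∀ x ∈ q.divisors ×ˢ q.divisors, f x ∈ q.divisors) :
    ∑ d ∈ q.divisors, (∑ x ∈ (q.divisors ×ˢ q.divisors).filter (fun x => f x = d),
        ε x.1 * ε x.2) * (d : ℝ)
      = ∑ x ∈ q.divisors ×ˢ q.divisors, ε x.1 * ε x.2 * (f x : ℝ) := by
  rw [← Finset.sum_fiberwise_of_maps_to hf (fun x => ε x.1 * ε x.2 * (f x : ℝ))]
  refine Finset.sum_congr rfl fun d hd => ?_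
  rw [Finset.sum_mul]
  refine Finset.sum_congr rfl fun x hx => ?_
  rw [Finset.mem_filter] at hx
  rw [hx.2]

lemma gcd_add_lcm_of_dvd_prime_pow {p m : ℕ} (hp : p.Prime) {a b : ℕ}
    (ha : a ∣ p ^ m) (hb : b ∣ p ^ m) : Nat.gcd a b + Nat.lcm a b = a + b := by
  obtain ⟨i, hi, rfl⟩ := (Nat.dvd_prime_pow hp).mp ha
  obtain ⟨j, hj, rfl⟩ := (Nat.dvd_prime_pow hp).mp hb
  rcases le_total i j with h | h
  · have hd : p ^ i ∣ p ^ j := pow_dvd_pow p h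
    rw [Nat.gcd_eq_left hd,
      Nat.dvd_antisymm (Nat.lcm_dvd hd dvd_rfl) (Nat.dvd_lcm_right _ _)]
  · have hd : p ^ j ∣ p ^ i := pow_dvd_pow p h
    rw [Nat.gcd_eq_right hd,
      Nat.dvd_antisymm (Nat.lcm_dvd dvd_rfl hd) (Nat.dvd_lcm_left _ _)]
    omega

/-- Let `q = p^m` be a prime power and `(ε_d : d ∈ D_q)` a probability vector on the
positive divisors of `q`.  Then
`ln(Σ_{d ∈ D_q} ε_d^−·d) + ln(Σ_{d ∈ D_q} ε_d^+·d) ≤ 2·ln(Σ_{d ∈ D_q} ε_d·d)`. -/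
theorem stmt_13 (p m q : ℕ) (hp : p.Prime) (hm : 1 ≤ m) (hq : q = p ^ m)
    (ε : ℕ → ℝ) (hε : ∀ d ∈ q.divisors, 0 ≤ ε d) (hsum : ∑ d ∈ q.divisors, ε d = 1) :
    Real.log (∑ d ∈ q.divisors, epsMinus q ε d * (d : ℝ))
        + Real.log (∑ d ∈ q.divisors, epsPlus q ε d * (d : ℝ))
      ≤ 2 * Real.log (∑ d ∈ q.divisors, ε d * (d : ℝ)) := by
  have hq0 : q ≠ 0 := by
    rw [hq]; exact pow_ne_zero _ hp.pos.ne'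
  have hmem : ∀ x ∈ q.divisors ×ˢ q.divisors, x.1 ∣ q ∧ x.2 ∣ q := by
    intro x hx
    rw [Finset.mem_product, Nat.mem_divisors, Nat.mem_divisors] at hx
    exact ⟨hx.1.1, hx.2.1⟩
  have hpos : ∀ x ∈ q.divisors ×ˢ q.divisors, 0 < x.1 ∧ 0 < x.2 := by
    intro x hx
    rw [Finset.mem_product] at hx
    exact ⟨Nat.pos_of_mem_divisors hx.1, Nat.pos_of_mem_divisors hx.2⟩
  have hgcd_mem : ∀ x ∈ q.divisors ×ˢ q.divisors, Nat.gcd x.1 x.2 ∈ q.divisors := by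
    intro x hx
    exact Nat.mem_divisors.mpr ⟨(Nat.gcd_dvd_left _ _).trans (hmem x hx).1, hq0⟩
  have hlcm_mem : ∀ x ∈ q.divisors ×ˢ q.divisors, Nat.lcm x.1 x.2 ∈ q.divisors := by
    intro x hx
    exact Nat.mem_divisors.mpr ⟨Nat.lcm_dvd (hmem x hx).1 (hmem x hx).2, hq0⟩
  have hεε : ∀ x ∈ q.divisors ×ˢ q.divisors, 0 ≤ ε x.1 * ε x.2 := by
    intro x hx
    rw [Finset.mem_product] at hx
    exact mul_nonneg (hε _ hx.1) (hε _ hx.2)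
  set S := ∑ d ∈ q.divisors, ε d * (d : ℝ) with hS
  set A := ∑ d ∈ q.divisors, epsMinus q ε d * (d : ℝ) with hAdef
  set B := ∑ d ∈ q.divisors, epsPlus q ε d * (d : ℝ) with hBdef
  have hA : A = ∑ x ∈ q.divisors ×ˢ q.divisors, ε x.1 * ε x.2 * (Nat.gcd x.1 x.2 : ℝ) :=
    fiber_sum q ε _ hgcd_mem
  have hB : B = ∑ x ∈ q.divisors ×ˢ q.divisors, ε x.1 * ε x.2 * (Nat.lcm x.1 x.2 : ℝ) :=
    fiber_sum q ε _ hlcm_mem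
  -- the total weight is 1
  have hW : ∑ x ∈ q.divisors ×ˢ q.divisors, ε x.1 * ε x.2 = 1 := by
    rw [Finset.sum_product]
    calc ∑ a ∈ q.divisors, ∑ b ∈ q.divisors, ε a * ε b
        = ∑ a ∈ q.divisors, ε a * ∑ b ∈ q.divisors, ε b := by
          exact Finset.sum_congr rfl fun a _ => by rw [Finset.mul_sum]
      _ = 1 := by rw [hsum]; simpa using hsum
  -- lower bounds
  have hS1 : (1 : ℝ) ≤ S := by
    rw [← hsum, hS]
    refine Finset.sum_le_sum fun d hd => ?_
    have h1 : (1 : ℝ) ≤ (d : ℝ) := by exact_mod_cast Nat.pos_of_mem_divisors hd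
    nlinarith [hε d hd]
  have hA1 : (1 : ℝ) ≤ A := by
    rw [← hW, hA]
    refine Finset.sum_le_sum fun x hx => ?_
    have h1 : (1 : ℝ) ≤ (Nat.gcd x.1 x.2 : ℝ) := by
      exact_mod_cast Nat.gcd_pos_of_pos_left _ (hpos x hx).1
    nlinarith [hεε x hx]
  have hB1 : (1 : ℝ) ≤ B := by
    rw [← hW, hB]
    refine Finset.sum_le_sum fun x hx => ?_
    have h1 : (1 : ℝ) ≤ (Nat.lcm x.1 x.2 : ℝ) := by
      exact_mod_cast Nat.pos_of_ne_zero (Nat.lcm_ne_zero (hpos x hx).1.ne' (hpos x hx).2.ne')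
    nlinarith [hεε x hx]
  -- A + B = 2S
  have hfirst : ∑ x ∈ q.divisors ×ˢ q.divisors, ε x.1 * ε x.2 * (x.1 : ℝ) = S := by
    rw [Finset.sum_product]
    calc ∑ a ∈ q.divisors, ∑ b ∈ q.divisors, ε a * ε b * (a : ℝ)
        = ∑ a ∈ q.divisors, ε a * (a : ℝ) * ∑ b ∈ q.divisors, ε b := by
          refine Finset.sum_congr rfl fun a _ => ?_
          rw [Finset.mul_sum]
          exact Finset.sum_congr rfl fun b _ => by ring
      _ = S := by rw [hsum]; simp [hS]
  have hsecond : ∑ x ∈ q.divisors ×ˢ q.divisors, ε x.1 * ε x.2 * (x.2 : ℝ) = S := by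
    rw [Finset.sum_product]
    calc ∑ a ∈ q.divisors, ∑ b ∈ q.divisors, ε a * ε b * (b : ℝ)
        = ∑ a ∈ q.divisors, ε a * ∑ b ∈ q.divisors, ε b * (b : ℝ) := by
          refine Finset.sum_congr rfl fun a _ => ?_
          rw [Finset.mul_sum]
          exact Finset.sum_congr rfl fun b _ => by ring
      _ = S := by rw [← hS, ← Finset.sum_mul, hsum, one_mul]
  have hAB : A + B = 2 * S := by
    rw [hA, hB, ← Finset.sum_add_distrib]
    have : ∀ x ∈ q.divisors ×ˢ q.divisors,
        ε x.1 * ε x.2 * (Nat.gcd x.1 x.2 : ℝ) + ε x.1 * ε x.2 * (Nat.lcm x.1 x.2 : ℝ)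
          = ε x.1 * ε x.2 * (x.1 : ℝ) + ε x.1 * ε x.2 * (x.2 : ℝ) := by
      intro x hx
      have h := gcd_add_lcm_of_dvd_prime_pow hp (hq ▸ (hmem x hx).1) (hq ▸ (hmem x hx).2)
      have h' : (Nat.gcd x.1 x.2 : ℝ) + (Nat.lcm x.1 x.2 : ℝ) = (x.1 : ℝ) + (x.2 : ℝ) := by
        exact_mod_cast congrArg (Nat.cast : ℕ → ℝ) h
      rw [← mul_add, ← mul_add, h']
    rw [Finset.sum_congr rfl this, Finset.sum_add_distrib, hfirst, hsecond]
    ring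
  -- conclude
  have hABle : A * B ≤ S ^ 2 := by nlinarith [sq_nonneg (A - B)]
  have hApos : (0 : ℝ) < A := lt_of_lt_of_le one_pos hA1
  have hBpos : (0 : ℝ) < B := lt_of_lt_of_le one_pos hB1
  rw [← Real.log_mul hApos.ne' hBpos.ne']
  calc Real.log (A * B) ≤ Real.log (S ^ 2) :=
        Real.log_le_log (mul_pos hApos hBpos) hABle
    _ = 2 * Real.log S := by rw [Real.log_pow]; norm_num
end

section
/- For μ-almost every ω ∈ Ω and every r with 0 ≤ r ≤ m, the sequence (E_{r,n}(ω))_{n ≥ 0} converges, and its limit E_{r,∞}(ω) equals either 0 or 1. -/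
open Finset MeasureTheory Filter

/-- The polarization process `E_{r,n}` on `Ω = ℕ → Bool` (`false` = `−`, `true` = `+`):
`E_{r,0} = ε_r` and, depending on the `(n+1)`-th coordinate of `ω`,
`E_{r,n+1} = E_{r,n}·(E_{r,n} + 2·Σ_{t=r+1}^{m} E_{t,n})` (coordinate `−`) or
`E_{r,n+1} = E_{r,n}·(E_{r,n} + 2·Σ_{t=0}^{r−1} E_{t,n})` (coordinate `+`). -/
noncomputable def Eproc (m : ℕ) (ε : ℕ → ℝ) : ℕ → (ℕ → Bool) → ℕ → ℝ
  | 0, _, r => ε r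
  | n + 1, ω, r =>
      if ω n = false then
        Eproc m ε n ω r * (Eproc m ε n ω r + 2 * ∑ t ∈ Finset.Icc (r + 1) m, Eproc m ε n ω t)
      else
        Eproc m ε n ω r * (Eproc m ε n ω r + 2 * ∑ t ∈ Finset.range r, Eproc m ε n ω t)

open scoped ENNReal

/-- one polarization step: `false ↦ x²`, `true ↦ 2x − x²`. -/
noncomputable def pstep : Bool → ℝ → ℝ
  | false, x => x^2
  | true, x => 2*x - x^2

noncomputable def porbit (ω : ℕ → Bool) (x : ℝ) : ℕ → ℝ
  | 0 => x
  | n+1 => pstep (ω n) (porbit ω x n)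

noncomputable def porbitL : List Bool → ℝ → ℝ
  | [], x => x
  | b :: l, x => porbitL l (pstep b x)

noncomputable def gz (x : ℝ) : ℝ := Real.sqrt (x * (1 - x))

lemma porbitL_concat (l : List Bool) (b : Bool) (x : ℝ) :
    porbitL (l.concat b) x = pstep b (porbitL l x) := by
  induction l generalizing x with
  | nil => rfl
  | cons c l ih => exact ih (pstep c x)

lemma porbit_eq (ω : ℕ → Bool) (x : ℝ) (n : ℕ) :
    porbit ω x n = porbitL (List.ofFn fun i : Fin n => ω i) x := by
  induction n with
  | zero => rfl
  | succ n ih =>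
      rw [List.ofFn_succ' (fun i : Fin (n+1) => ω i), porbitL_concat]
      simp only [Fin.coe_castSucc, Fin.val_last]
      rw [porbit, ih]

lemma pstep_mem (b : Bool) {x : ℝ} (h0 : 0 ≤ x) (h1 : x ≤ 1) :
    0 ≤ pstep b x ∧ pstep b x ≤ 1 := by
  cases b <;> simp only [pstep] <;> constructor <;> nlinarith

lemma porbit_mem (ω : ℕ → Bool) {x : ℝ} (h0 : 0 ≤ x) (h1 : x ≤ 1) (n : ℕ) :
    0 ≤ porbit ω x n ∧ porbit ω x n ≤ 1 := by
  induction n with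
  | zero => exact ⟨h0, h1⟩
  | succ n ih => exact pstep_mem _ ih.1 ih.2

/-- key analytic inequality -/
lemma key_ineq {x : ℝ} (h0 : 0 ≤ x) (h1 : x ≤ 1) :
    gz (pstep false x) + gz (pstep true x) ≤ Real.sqrt 3 * gz x := by
  have hxz : (0:ℝ) ≤ x * (1 - x) := mul_nonneg h0 (by linarith)
  have e1 : pstep false x * (1 - pstep false x) = (x * (1-x)) * (x * (1+x)) := by
    simp only [pstep]; ring
  have e2 : pstep true x * (1 - pstep true x) = (x * (1-x)) * ((2-x) * (1-x)) := by
    simp only [pstep]; ring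
  have h1' : gz (pstep false x) = gz x * Real.sqrt (x * (1+x)) := by
    rw [gz, gz, e1, Real.sqrt_mul hxz]
  have h2' : gz (pstep true x) = gz x * Real.sqrt ((2-x) * (1-x)) := by
    rw [gz, gz, e2, Real.sqrt_mul hxz]
  rw [h1', h2', ← mul_add, mul_comm (Real.sqrt 3)]
  apply mul_le_mul_of_nonneg_left _ (Real.sqrt_nonneg _)
  -- √(x(1+x)) + √((2−x)(1−x)) ≤ √3
  set a := Real.sqrt (x * (1+x)) with ha
  set b := Real.sqrt ((2-x) * (1-x)) with hb
  have hA : (0:ℝ) ≤ x * (1+x) := by nlinarith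
  have hB : (0:ℝ) ≤ (2-x) * (1-x) := by nlinarith
  have ha2 : a^2 = x * (1+x) := Real.sq_sqrt hA
  have hb2 : b^2 = (2-x) * (1-x) := Real.sq_sqrt hB
  have han : 0 ≤ a := Real.sqrt_nonneg _
  have hbn : 0 ≤ b := Real.sqrt_nonneg _
  have habsq : (a + b)^2 ≤ 3 := by
    have h2ab : 2*(a*b) ≤ 1 + 2*x - 2*x^2 := by
      have hsq : (2*(a*b))^2 ≤ (1 + 2*x - 2*x^2)^2 := by
        have : (a*b)^2 = (x*(1+x)) * ((2-x)*(1-x)) := by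
          rw [mul_pow, ha2, hb2]
        nlinarith [sq_nonneg (2*x-1), sq_nonneg (x - x^2)]
      have hpos : (0:ℝ) ≤ 1 + 2*x - 2*x^2 := by nlinarith
      nlinarith [mul_nonneg (mul_nonneg han hbn) (mul_nonneg han hbn)]
    nlinarith
  have h3 : Real.sqrt 3 = Real.sqrt 3 := rfl
  calc a + b = Real.sqrt ((a+b)^2) := (Real.sqrt_sq (by linarith)).symm
    _ ≤ Real.sqrt 3 := Real.sqrt_le_sqrt habsq


lemma gz_nonneg (x : ℝ) : 0 ≤ gz x := Real.sqrt_nonneg _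

lemma gz_le_half {x : ℝ} (h0 : 0 ≤ x) (h1 : x ≤ 1) : gz x ≤ 1/2 := by
  have : x * (1 - x) ≤ (1/2)^2 := by nlinarith [sq_nonneg (x - 1/2)]
  calc gz x ≤ Real.sqrt ((1/2)^2) := Real.sqrt_le_sqrt this
    _ = 1/2 := Real.sqrt_sq (by norm_num)

lemma sum_gz_le (n : ℕ) : ∀ x : ℝ, 0 ≤ x → x ≤ 1 →
    ∑ f : Fin n → Bool, gz (porbitL (List.ofFn f) x) ≤ Real.sqrt 3 ^ n * gz x := by
  induction n with
  | zero =>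
      intro x h0 h1
      simp [porbitL, List.ofFn_zero]
  | succ n ih =>
      intro x h0 h1
      have e : ∑ f : Fin (n+1) → Bool, gz (porbitL (List.ofFn f) x)
          = ∑ p : Bool × (Fin n → Bool), gz (porbitL (List.ofFn (Fin.cons p.1 p.2)) x) := by
        exact (Fintype.sum_equiv (Fin.consEquiv fun _ => Bool) _ _ fun p => rfl).symm
      rw [e, Fintype.sum_prod_type]
      have e2 : ∀ (b : Bool) (f : Fin n → Bool),
          porbitL (List.ofFn (Fin.cons b f)) x = porbitL (List.ofFn f) (pstep b x) := by
        intro b f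
        rw [List.ofFn_succ]
        simp [porbitL, Fin.cons_zero, Fin.cons_succ]
      have hb : ∀ b : Bool, ∑ f : Fin n → Bool, gz (porbitL (List.ofFn (Fin.cons b f)) x)
          ≤ Real.sqrt 3 ^ n * gz (pstep b x) := by
        intro b
        simp only [e2]
        exact ih _ (pstep_mem b h0 h1).1 (pstep_mem b h0 h1).2
      calc ∑ b : Bool, ∑ f : Fin n → Bool, gz (porbitL (List.ofFn (Fin.cons b f)) x)
          ≤ Real.sqrt 3 ^ n * gz (pstep false x) + Real.sqrt 3 ^ n * gz (pstep true x) := by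
            rw [Fintype.sum_bool]; exact add_le_add (hb true) (hb false) |>.trans (le_of_eq (add_comm _ _))
        _ = Real.sqrt 3 ^ n * (gz (pstep false x) + gz (pstep true x)) := by ring
        _ ≤ Real.sqrt 3 ^ n * (Real.sqrt 3 * gz x) :=
            mul_le_mul_of_nonneg_left (key_ineq h0 h1) (pow_nonneg (Real.sqrt_nonneg _) _)
        _ = Real.sqrt 3 ^ (n+1) * gz x := by ring


lemma orbit_conv (μ : Measure (ℕ → Bool)) [IsProbabilityMeasure μ]
    (hμ : ∀ (s : Finset ℕ) (f : ℕ → Bool),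
      μ {ω | ∀ n ∈ s, ω n = f n} = (1 / 2 : ENNReal) ^ s.card)
    {x : ℝ} (h0 : 0 ≤ x) (h1 : x ≤ 1) :
    ∀ᵐ ω ∂μ, ∃ L : ℝ,
      Tendsto (fun n => porbit ω x n) atTop (nhds L) ∧ (L = 0 ∨ L = 1) := by
  set A : ℕ → Set (ℕ → Bool) := fun n => {ω | (9/10:ℝ)^n < gz (porbit ω x n)} with hA
  have hAn : ∀ n, μ (A n) ≤ ENNReal.ofReal ((1/2) * (Real.sqrt 3/(9/5))^n) := by
    intro n
    set B : Finset (Fin n → Bool) :=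
      univ.filter (fun f => (9/10:ℝ)^n < gz (porbitL (List.ofFn f) x)) with hB
    have hsub : A n ⊆ ⋃ f ∈ B,
        {ω : ℕ → Bool | ∀ i ∈ Finset.range n,
          ω i = (fun j : ℕ => if h : j < n then f ⟨j, h⟩ else false) i} := by
      intro ω hω
      refine Set.mem_iUnion₂.2 ⟨fun i : Fin n => ω i, ?_, ?_⟩
      · refine mem_filter.2 ⟨mem_univ _, ?_⟩
        rw [← porbit_eq]; exact hω
      · intro i hi
        simp only [Finset.mem_range] at hi
        simp [hi]
    have hcount : (B.card : ℝ) * (9/10)^n ≤ Real.sqrt 3 ^ n * (1/2) := by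
      calc (B.card : ℝ) * (9/10)^n = ∑ _f ∈ B, (9/10:ℝ)^n := by
            rw [Finset.sum_const, nsmul_eq_mul]
        _ ≤ ∑ f ∈ B, gz (porbitL (List.ofFn f) x) :=
            Finset.sum_le_sum fun f hf => le_of_lt (mem_filter.1 hf).2
        _ ≤ ∑ f : Fin n → Bool, gz (porbitL (List.ofFn f) x) :=
            Finset.sum_le_sum_of_subset_of_nonneg (filter_subset _ _)
              (fun f _ _ => gz_nonneg _)
        _ ≤ Real.sqrt 3 ^ n * gz x := sum_gz_le n x h0 h1
        _ ≤ Real.sqrt 3 ^ n * (1/2) :=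
            mul_le_mul_of_nonneg_left (gz_le_half h0 h1)
              (pow_nonneg (Real.sqrt_nonneg _) _)
    have hmeas : μ (A n) ≤ (B.card : ℝ≥0∞) * (1/2 : ℝ≥0∞)^n := by
      calc μ (A n) ≤ μ (⋃ f ∈ B, {ω : ℕ → Bool | ∀ i ∈ Finset.range n,
              ω i = (fun j : ℕ => if h : j < n then f ⟨j, h⟩ else false) i}) :=
            measure_mono hsub
        _ ≤ ∑ f ∈ B, μ {ω : ℕ → Bool | ∀ i ∈ Finset.range n,
              ω i = (fun j : ℕ => if h : j < n then f ⟨j, h⟩ else false) i} :=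
            measure_biUnion_finset_le _ _
        _ = ∑ _f ∈ B, (1/2 : ℝ≥0∞)^n := by
            refine Finset.sum_congr rfl fun f _ => ?_
            rw [hμ (Finset.range n) _, Finset.card_range]
        _ = (B.card : ℝ≥0∞) * (1/2 : ℝ≥0∞)^n := by
            rw [Finset.sum_const, nsmul_eq_mul]
    have h2 : (1/2 : ℝ≥0∞) = ENNReal.ofReal (1/2 : ℝ) := by
      rw [ENNReal.ofReal_div_of_pos (by norm_num)]; norm_num
    have hreal : (B.card : ℝ) * (1/2)^n ≤ (1/2) * (Real.sqrt 3/(9/5))^n := by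
      have h910 : (0:ℝ) < (9/10)^n := by positivity
      rw [← mul_le_mul_iff_of_pos_right h910]
      have hlast : (1/2) * (Real.sqrt 3/(9/5))^n * (9/10)^n
          = Real.sqrt 3 ^ n * (1/2) * (1/2)^n := by
        rw [div_pow]
        have h910e : ((9:ℝ)/10)^n = (9/5)^n * (1/2)^n := by rw [← mul_pow]; norm_num
        have h95 : ((9:ℝ)/5)^n ≠ 0 := by positivity
        rw [h910e]
        field_simp
      calc (B.card : ℝ) * (1/2)^n * (9/10)^n = (B.card : ℝ) * (9/10)^n * (1/2)^n := by ring
        _ ≤ Real.sqrt 3 ^ n * (1/2) * (1/2)^n :=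
            mul_le_mul_of_nonneg_right hcount (by positivity)
        _ = (1/2) * (Real.sqrt 3/(9/5))^n * (9/10)^n := hlast.symm
    calc μ (A n) ≤ (B.card : ℝ≥0∞) * (1/2 : ℝ≥0∞)^n := hmeas
      _ = ENNReal.ofReal ((B.card : ℝ) * (1/2)^n) := by
          rw [h2, ← ENNReal.ofReal_pow (by norm_num), ← ENNReal.ofReal_natCast B.card,
            ← ENNReal.ofReal_mul (by positivity)]
      _ ≤ _ := ENNReal.ofReal_le_ofReal hreal
  have hq0 : (0:ℝ) ≤ Real.sqrt 3/(9/5) := by positivity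
  have hq1 : Real.sqrt 3/(9/5) < 1 := by
    rw [div_lt_one (by norm_num)]
    exact (Real.sqrt_lt' (by norm_num)).2 (by norm_num)
  have hsummable : Summable (fun n => (1/2 : ℝ) * (Real.sqrt 3/(9/5))^n) :=
    (summable_geometric_of_lt_one hq0 hq1).mul_left _
  have htsum : (∑' n, μ (A n)) ≠ ⊤ := by
    refine ne_top_of_le_ne_top ?_ (ENNReal.tsum_le_tsum hAn)
    rw [← ENNReal.ofReal_tsum_of_nonneg (fun n => by positivity) hsummable]
    exact ENNReal.ofReal_ne_top
  filter_upwards [ae_eventually_notMem htsum] with ω hω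
  -- pointwise part
  have hev : ∀ᶠ n in atTop, gz (porbit ω x n) ≤ (9/10:ℝ)^n := by
    filter_upwards [hω] with n hn
    exact le_of_not_gt hn
  set u : ℕ → ℝ := fun n => porbit ω x n with hu
  have hmem : ∀ n, 0 ≤ u n ∧ u n ≤ 1 := porbit_mem ω h0 h1
  have habs : ∀ n, |u (n+1) - u n| = u n * (1 - u n) := by
    intro n
    have hnn : 0 ≤ u n * (1 - u n) := mul_nonneg (hmem n).1 (by linarith [(hmem n).2])
    have : u (n+1) = pstep (ω n) (u n) := rfl
    rw [this]
    cases ω n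
    · have : pstep false (u n) - u n = -(u n * (1 - u n)) := by simp [pstep]; ring
      rw [this, abs_neg, abs_of_nonneg hnn]
    · have : pstep true (u n) - u n = u n * (1 - u n) := by simp [pstep]; ring
      rw [this, abs_of_nonneg hnn]
  have hzg : ∀ n, u n * (1 - u n) = gz (u n) ^ 2 := by
    intro n
    rw [gz, Real.sq_sqrt (mul_nonneg (hmem n).1 (by linarith [(hmem n).2]))]
  have hevd : ∀ᶠ n in atTop, |u (n+1) - u n| ≤ ((81:ℝ)/100)^n := by
    filter_upwards [hev] with n hn
    rw [habs n, hzg n]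
    calc gz (u n) ^ 2 ≤ ((9/10:ℝ)^n)^2 :=
        pow_le_pow_left₀ (gz_nonneg _) hn 2
      _ = ((81:ℝ)/100)^n := by rw [← pow_mul, pow_mul']; norm_num
  obtain ⟨N, hN⟩ := eventually_atTop.1 hevd
  have hqs : Summable (fun n : ℕ => ((81:ℝ)/100)^(n+N)) := by
    simp_rw [pow_add]
    exact (summable_geometric_of_lt_one (by norm_num) (by norm_num)).mul_right _
  have hsum2 : Summable (fun n => |u (n+1) - u n|) := by
    rw [← summable_nat_add_iff N]
    exact Summable.of_nonneg_of_le (fun n => abs_nonneg _)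
      (fun n => hN (n+N) (Nat.le_add_left _ _)) hqs
  have hcauchy : CauchySeq u := by
    apply cauchySeq_of_summable_dist
    simpa [Real.dist_eq, abs_sub_comm] using hsum2
  obtain ⟨L, hL⟩ := cauchySeq_tendsto_of_complete hcauchy
  refine ⟨L, hL, ?_⟩
  have hz0 : Tendsto (fun n => u n * (1 - u n)) atTop (nhds 0) := by
    have e1 : ∀ᶠ n in atTop, 0 ≤ u n * (1 - u n) := by
      filter_upwards with n
      exact mul_nonneg (hmem n).1 (by linarith [(hmem n).2])
    have e2 : ∀ᶠ n in atTop, u n * (1 - u n) ≤ ((81:ℝ)/100)^n := by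
      filter_upwards [hevd] with n hn
      rw [← habs n]; exact hn
    exact squeeze_zero' e1 e2
      (tendsto_pow_atTop_nhds_zero_of_lt_one (by norm_num) (by norm_num))
  have hzL : Tendsto (fun n => u n * (1 - u n)) atTop (nhds (L * (1 - L))) :=
    hL.mul (tendsto_const_nhds.sub hL)
  have : L * (1 - L) = 0 := tendsto_nhds_unique hzL hz0
  rcases mul_eq_zero.1 this with h | h
  · exact Or.inl h
  · exact Or.inr (by linarith)


lemma Icc_split {r M : ℕ} (h : r ≤ M) (a : ℕ → ℝ) :
    ∑ s ∈ Icc r M, a s = a r + ∑ s ∈ Icc (r+1) M, a s := by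
  have hmem : r ∈ Icc r M := mem_Icc.2 ⟨le_refl r, h⟩
  rw [← Finset.add_sum_erase _ a hmem, Finset.Icc_erase_left, ← Finset.Icc_add_one_left_eq_Ioc]

lemma tail_sq (a : ℕ → ℝ) (M : ℕ) :
    ∀ k r : ℕ, M + 1 - r ≤ k →
      ∑ s ∈ Icc r M, a s * (a s + 2 * ∑ t ∈ Icc (s+1) M, a t) = (∑ s ∈ Icc r M, a s)^2 := by
  intro k
  induction k with
  | zero =>
      intro r hr
      have : M < r := by omega
      rw [Finset.Icc_eq_empty (by omega)]
      simp
  | succ k ih =>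
      intro r hr
      by_cases h : r ≤ M
      · rw [Icc_split h (fun s => a s * (a s + 2 * ∑ t ∈ Icc (s+1) M, a t)),
          Icc_split h a, ih (r+1) (by omega)]
        ring
      · rw [Finset.Icc_eq_empty (by omega)]
        simp

lemma head_sq (a : ℕ → ℝ) (r : ℕ) :
    ∑ s ∈ Finset.range r, a s * (a s + 2 * ∑ t ∈ Finset.range s, a t)
      = (∑ s ∈ Finset.range r, a s)^2 := by
  induction r with
  | zero => simp
  | succ r ih =>
      rw [Finset.sum_range_succ, Finset.sum_range_succ a, ih]
      ring

section main
variable (m : ℕ) (ε : ℕ → ℝ)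

lemma Eproc_succ (n : ℕ) (ω : ℕ → Bool) (r : ℕ) :
    Eproc m ε (n+1) ω r =
      if ω n = false then
        Eproc m ε n ω r * (Eproc m ε n ω r + 2 * ∑ t ∈ Finset.Icc (r + 1) m, Eproc m ε n ω t)
      else
        Eproc m ε n ω r * (Eproc m ε n ω r + 2 * ∑ t ∈ Finset.range r, Eproc m ε n ω t) := rfl

lemma total_one (hsum : ∑ r ∈ Finset.range (m + 1), ε r = 1) (ω : ℕ → Bool) :
    ∀ n, ∑ t ∈ Finset.range (m+1), Eproc m ε n ω t = 1 := by
  intro n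
  induction n with
  | zero => exact hsum
  | succ n ih =>
      cases hb : ω n
      · simp only [Eproc_succ, hb, if_pos]
        rw [Finset.range_eq_Ico, Finset.Ico_add_one_right_eq_Icc]
        rw [tail_sq (Eproc m ε n ω) m (m+1) 0 (by omega)]
        rw [← Finset.Ico_add_one_right_eq_Icc, ← Finset.range_eq_Ico, ih]
        norm_num
      · simp only [Eproc_succ, hb, if_neg, Bool.true_eq_false, not_false_iff]
        rw [head_sq (Eproc m ε n ω) (m+1), ih]
        norm_num


lemma Eproc_nonneg (hε : ∀ r ≤ m, 0 ≤ ε r) (ω : ℕ → Bool) :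
    ∀ n, ∀ r ≤ m, 0 ≤ Eproc m ε n ω r := by
  intro n
  induction n with
  | zero => exact hε
  | succ n ih =>
      intro r hr
      rw [Eproc_succ]
      split_ifs
      · refine mul_nonneg (ih r hr) (add_nonneg (ih r hr) ?_)
        refine mul_nonneg (by norm_num) (Finset.sum_nonneg fun t ht => ?_)
        exact ih t (mem_Icc.1 ht).2
      · refine mul_nonneg (ih r hr) (add_nonneg (ih r hr) ?_)
        refine mul_nonneg (by norm_num) (Finset.sum_nonneg fun t ht => ?_)
        have := Finset.mem_range.1 ht
        exact ih t (by omega)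

lemma head_split (hsum : ∑ r ∈ Finset.range (m + 1), ε r = 1) (ω : ℕ → Bool)
    (n : ℕ) {r : ℕ} (hr : r ≤ m + 1) :
    ∑ t ∈ Finset.range r, Eproc m ε n ω t + ∑ t ∈ Icc r m, Eproc m ε n ω t = 1 := by
  rw [Finset.range_eq_Ico, ← Finset.Ico_add_one_right_eq_Icc]
  rw [Finset.sum_Ico_consecutive _ (Nat.zero_le r) hr]
  rw [Finset.Ico_add_one_right_eq_Icc, ← Finset.Ico_add_one_right_eq_Icc, ← Finset.range_eq_Ico]
  exact total_one m ε hsum ω n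

lemma tailsum_step (hsum : ∑ r ∈ Finset.range (m + 1), ε r = 1) (ω : ℕ → Bool)
    (n : ℕ) {r : ℕ} (hr : r ≤ m + 1) :
    ∑ t ∈ Icc r m, Eproc m ε (n+1) ω t
      = pstep (ω n) (∑ t ∈ Icc r m, Eproc m ε n ω t) := by
  cases hb : ω n
  · simp only [Eproc_succ, hb, if_pos]
    exact tail_sq (Eproc m ε n ω) m (m+1) r (by omega)
  · have h1 : ∑ t ∈ Finset.range r, Eproc m ε (n+1) ω t
        = (∑ t ∈ Finset.range r, Eproc m ε n ω t)^2 := by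
      have : ∀ t, Eproc m ε (n+1) ω t
          = Eproc m ε n ω t * (Eproc m ε n ω t + 2 * ∑ s ∈ Finset.range t, Eproc m ε n ω s) := by
        intro t
        rw [Eproc_succ, if_neg (by simp [hb])]
      calc ∑ t ∈ Finset.range r, Eproc m ε (n+1) ω t
          = ∑ t ∈ Finset.range r, Eproc m ε n ω t *
              (Eproc m ε n ω t + 2 * ∑ s ∈ Finset.range t, Eproc m ε n ω s) :=
            Finset.sum_congr rfl fun t _ => this t
        _ = _ := head_sq (Eproc m ε n ω) r
    have hs1 := head_split m ε hsum ω (n+1) hr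
    have hs0 := head_split m ε hsum ω n hr
    show _ = 2 * (∑ t ∈ Icc r m, Eproc m ε n ω t) - (∑ t ∈ Icc r m, Eproc m ε n ω t)^2
    linear_combination hs1 - h1 - ((∑ t ∈ Finset.range r, Eproc m ε n ω t) + 1
      - (∑ t ∈ Icc r m, Eproc m ε n ω t)) * hs0

lemma tailsum_orbit (hsum : ∑ r ∈ Finset.range (m + 1), ε r = 1) (ω : ℕ → Bool)
    {r : ℕ} (hr : r ≤ m + 1) (n : ℕ) :
    ∑ t ∈ Icc r m, Eproc m ε n ω t = porbit ω (∑ t ∈ Icc r m, ε t) n := by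
  induction n with
  | zero => rfl
  | succ n ih => rw [tailsum_step m ε hsum ω n hr, ih]; rfl

end main


/-- Under the fair-coin product measure `μ` on `Ω = ℕ → Bool` (characterized by its values on
cylinder sets), for `μ`-almost every `ω` and every `0 ≤ r ≤ m`, the sequence
`(E_{r,n}(ω))_n` converges and its limit is `0` or `1`. -/
theorem stmt_16 (p m : ℕ) (hp : p.Prime) (hm : 1 ≤ m)
    (ε : ℕ → ℝ) (hε : ∀ r ≤ m, 0 ≤ ε r) (hsum : ∑ r ∈ Finset.range (m + 1), ε r = 1)
    (μ : Measure (ℕ → Bool)) [IsProbabilityMeasure μ]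
    (hμ : ∀ (s : Finset ℕ) (f : ℕ → Bool),
      μ {ω | ∀ n ∈ s, ω n = f n} = (1 / 2 : ENNReal) ^ s.card) :
    ∀ᵐ ω ∂μ, ∀ r ≤ m, ∃ L : ℝ,
      Tendsto (fun n => Eproc m ε n ω r) atTop (nhds L) ∧ (L = 0 ∨ L = 1) := by
  have hx0 : ∀ r : ℕ, 0 ≤ ∑ t ∈ Icc r m, ε t := by
    intro r
    exact Finset.sum_nonneg fun t ht => hε t (mem_Icc.1 ht).2
  have hx1 : ∀ r : ℕ, ∑ t ∈ Icc r m, ε t ≤ 1 := by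
    intro r
    rw [← hsum]
    refine Finset.sum_le_sum_of_subset_of_nonneg ?_ fun t ht _ => hε t (by
      have := Finset.mem_range.1 ht; omega)
    intro t ht
    exact Finset.mem_range.2 (by have := (mem_Icc.1 ht).2; omega)
  have hae : ∀ᵐ ω ∂μ, ∀ r : ℕ, r ≤ m + 1 → ∃ L : ℝ,
      Tendsto (fun n => porbit ω (∑ t ∈ Icc r m, ε t) n) atTop (nhds L) ∧ (L = 0 ∨ L = 1) := by
    rw [ae_all_iff]
    intro r
    by_cases h : r ≤ m + 1
    · filter_upwards [orbit_conv μ hμ (hx0 r) (hx1 r)] with ω hω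
      exact fun _ => hω
    · filter_upwards with ω hr
      exact absurd hr h
  filter_upwards [hae] with ω hω r hr
  obtain ⟨L1, hL1, hc1⟩ := hω r (by omega)
  obtain ⟨L2, hL2, hc2⟩ := hω (r+1) (by omega)
  have hT1 : Tendsto (fun n => ∑ t ∈ Icc r m, Eproc m ε n ω t) atTop (nhds L1) := by
    refine hL1.congr fun n => (tailsum_orbit m ε hsum ω (by omega) n).symm
  have hT2 : Tendsto (fun n => ∑ t ∈ Icc (r+1) m, Eproc m ε n ω t) atTop (nhds L2) := by
    refine hL2.congr fun n => (tailsum_orbit m ε hsum ω (by omega) n).symm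
  have hdiff : ∀ n, Eproc m ε n ω r
      = ∑ t ∈ Icc r m, Eproc m ε n ω t - ∑ t ∈ Icc (r+1) m, Eproc m ε n ω t := by
    intro n
    rw [Icc_split hr (Eproc m ε n ω)]
    ring
  refine ⟨L1 - L2, (hT1.sub hT2).congr fun n => (hdiff n).symm, ?_⟩
  have hle : L2 ≤ L1 := by
    refine le_of_tendsto_of_tendsto' hT2 hT1 fun n => ?_
    have h0 := Eproc_nonneg m ε hε ω n r hr
    rw [hdiff n] at h0
    linarith
  rcases hc1 with h1 | h1 <;> rcases hc2 with h2 | h2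
  · exact Or.inl (by rw [h1, h2]; ring)
  · exact absurd hle (by rw [h1, h2]; norm_num)
  · exact Or.inr (by rw [h1, h2]; ring)
  · exact Or.inl (by rw [h1, h2]; ring)
end

section
/- For each r with 0 ≤ r ≤ m, the sequence (E_{r,n})_{n ≥ 0} converges μ-almost surely to a random variable E_{r,∞} taking values in {0, 1}, and μ( { ω ∈ Ω : E_{r,∞}(ω) = 1 } ) = ε_r, hence μ( { ω ∈ Ω : E_{r,∞}(ω) = 0 } ) = 1 − ε_r. -/
open Finset MeasureTheory Filter Topology
open scoped NNReal ENNReal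
set_option linter.unusedSectionVars false
set_option linter.unusedVariables false
set_option maxHeartbeats 1000000

namespace Stmt17

lemma sum_mul_self_add (a : ℕ → ℝ) (k : ℕ) :
    ∑ t ∈ Finset.range k, a t * (a t + 2 * ∑ s ∈ Finset.range t, a s)
      = (∑ t ∈ Finset.range k, a t) ^ 2 := by
  induction k with
  | zero => simp
  | succ k ih => rw [Finset.sum_range_succ, Finset.sum_range_succ, ih]; ring

variable {m : ℕ} {ε : ℕ → ℝ}

lemma Eproc_succ (n : ℕ) (ω : ℕ → Bool) (r : ℕ) :
    Eproc m ε (n+1) ω r =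
      if ω n = false then
        Eproc m ε n ω r * (Eproc m ε n ω r + 2 * ∑ t ∈ Finset.Icc (r + 1) m, Eproc m ε n ω t)
      else
        Eproc m ε n ω r * (Eproc m ε n ω r + 2 * ∑ t ∈ Finset.range r, Eproc m ε n ω t) := rfl

lemma Eproc_nonneg (hε : ∀ r ≤ m, 0 ≤ ε r) (n : ℕ) (ω : ℕ → Bool) :
    ∀ r ≤ m, 0 ≤ Eproc m ε n ω r := by
  induction n with
  | zero => exact hε
  | succ n ih =>
    intro r hr
    rw [Eproc_succ]
    split
    · exact mul_nonneg (ih r hr) (add_nonneg (ih r hr) (by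
        refine mul_nonneg (by norm_num) (Finset.sum_nonneg fun t ht => ih t ?_)
        exact (Finset.mem_Icc.mp ht).2))
    · exact mul_nonneg (ih r hr) (add_nonneg (ih r hr) (by
        refine mul_nonneg (by norm_num) (Finset.sum_nonneg fun t ht => ih t ?_)
        exact ((Finset.mem_range.mp ht).le.trans hr)))

lemma Fstep (n : ℕ) (ω : ℕ → Bool)
    (Htot : ∑ t ∈ Finset.range (m+1), Eproc m ε n ω t = 1)
    (k : ℕ) (hk : k ≤ m + 1) :
    ∑ t ∈ Finset.range k, Eproc m ε (n+1) ω t =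
      if ω n = false then
        2 * (∑ t ∈ Finset.range k, Eproc m ε n ω t)
          - (∑ t ∈ Finset.range k, Eproc m ε n ω t)^2
      else (∑ t ∈ Finset.range k, Eproc m ε n ω t)^2 := by
  set a : ℕ → ℝ := fun t => Eproc m ε n ω t with ha
  have hIcc : ∀ t, t ≤ m → ∑ s ∈ Finset.Icc (t+1) m, a s
      = 1 - ∑ s ∈ Finset.range (t+1), a s := by
    intro t ht
    have h1 : ∑ s ∈ Finset.range (t+1), a s + ∑ s ∈ Finset.Ico (t+1) (m+1), a s
        = ∑ s ∈ Finset.range (m+1), a s := by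
      rw [Finset.range_eq_Ico, Finset.range_eq_Ico]
      exact Finset.sum_Ico_consecutive a (Nat.zero_le _) (Nat.succ_le_succ ht)
    rw [Finset.Ico_add_one_right_eq_Icc] at h1
    rw [Htot] at h1
    linarith
  by_cases hω : ω n = false
  · rw [if_pos hω]
    have hterm : ∀ t ∈ Finset.range k,
        Eproc m ε (n+1) ω t = 2 * a t - a t * (a t + 2 * ∑ s ∈ Finset.range t, a s) := by
      intro t ht
      have htm : t ≤ m := Nat.lt_succ_iff.mp (lt_of_lt_of_le (Finset.mem_range.mp ht) hk)
      rw [Eproc_succ, if_pos hω, hIcc t htm, Finset.sum_range_succ]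
      ring
    rw [Finset.sum_congr rfl hterm, Finset.sum_sub_distrib, ← Finset.mul_sum,
      sum_mul_self_add]
  · rw [if_neg hω]
    have hterm : ∀ t ∈ Finset.range k,
        Eproc m ε (n+1) ω t = a t * (a t + 2 * ∑ s ∈ Finset.range t, a s) := by
      intro t ht
      rw [Eproc_succ, if_neg hω]
    rw [Finset.sum_congr rfl hterm, sum_mul_self_add]

lemma Eproc_total (hsum : ∑ r ∈ Finset.range (m+1), ε r = 1) (n : ℕ) (ω : ℕ → Bool) :
    ∑ t ∈ Finset.range (m+1), Eproc m ε n ω t = 1 := by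
  induction n with
  | zero => exact hsum
  | succ n ih =>
    rw [Fstep n ω ih (m+1) le_rfl, ih]
    split <;> norm_num

lemma F_nonneg (hε : ∀ r ≤ m, 0 ≤ ε r) (n : ℕ) (ω : ℕ → Bool) (k : ℕ) (hk : k ≤ m + 1) :
    0 ≤ ∑ t ∈ Finset.range k, Eproc m ε n ω t :=
  Finset.sum_nonneg fun t ht =>
    Eproc_nonneg hε n ω t (Nat.lt_succ_iff.mp (lt_of_lt_of_le (Finset.mem_range.mp ht) hk))

lemma F_le_one (hε : ∀ r ≤ m, 0 ≤ ε r) (hsum : ∑ r ∈ Finset.range (m+1), ε r = 1)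
    (n : ℕ) (ω : ℕ → Bool) (k : ℕ) (hk : k ≤ m + 1) :
    ∑ t ∈ Finset.range k, Eproc m ε n ω t ≤ 1 := by
  rw [← Eproc_total hsum n ω]
  refine Finset.sum_le_sum_of_subset_of_nonneg (Finset.range_subset_range.mpr hk) ?_
  intro t ht _
  exact Eproc_nonneg hε n ω t (Nat.lt_succ_iff.mp (Finset.mem_range.mp ht))


/-- every set in a finite discrete pi type is measurable -/
lemma measurableSet_pi_bool {k : ℕ} (S : Set (Fin k → Bool)) : MeasurableSet S :=
  S.to_countable.measurableSet

def proj (n : ℕ) : (ℕ → Bool) → (Fin n → Bool) := fun ω i => ω i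

lemma measurable_proj (n : ℕ) : Measurable (proj n) :=
  measurable_pi_lambda _ fun i => measurable_pi_apply (i : ℕ)

def 𝓕 : Filtration ℕ (inferInstance : MeasurableSpace (ℕ → Bool)) where
  seq n := MeasurableSpace.comap (proj n) inferInstance
  mono' := by
    intro a b hab s hs
    obtain ⟨t, -, rfl⟩ := hs
    refine ⟨(fun y : Fin b → Bool => fun i : Fin a => y ⟨i, lt_of_lt_of_le i.2 hab⟩) ⁻¹' t,
      measurableSet_pi_bool _, rfl⟩
  le' := by
    intro n s hs
    obtain ⟨t, ht, rfl⟩ := hs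
    exact measurable_proj n (measurableSet_pi_bool t)

lemma Eproc_congr {n : ℕ} {ω ω' : ℕ → Bool} (h : ∀ i < n, ω i = ω' i) (r : ℕ) :
    Eproc m ε n ω r = Eproc m ε n ω' r := by
  induction n generalizing r with
  | zero => rfl
  | succ n ih =>
    have h' : ∀ i < n, ω i = ω' i := fun i hi => h i (hi.trans n.lt_succ_self)
    rw [Eproc_succ, Eproc_succ, h n n.lt_succ_self, ih h' r]
    have hsum1 : ∑ t ∈ Finset.Icc (r + 1) m, Eproc m ε n ω t
        = ∑ t ∈ Finset.Icc (r + 1) m, Eproc m ε n ω' t :=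
      Finset.sum_congr rfl fun t _ => ih h' t
    have hsum2 : ∑ t ∈ Finset.range r, Eproc m ε n ω t
        = ∑ t ∈ Finset.range r, Eproc m ε n ω' t :=
      Finset.sum_congr rfl fun t _ => ih h' t
    rw [hsum1, hsum2]


lemma stronglyMeasurable_F (k n : ℕ) :
    StronglyMeasurable[𝓕 n] (fun ω => ∑ t ∈ Finset.range k, Eproc m ε n ω t) := by
  classical
  set g : (Fin n → Bool) → ℝ := fun y =>
    ∑ t ∈ Finset.range k, Eproc m ε n (fun i => if h : i < n then y ⟨i, h⟩ else false) t with hg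
  have hfun : (fun ω => ∑ t ∈ Finset.range k, Eproc m ε n ω t) = g ∘ proj n := by
    funext ω
    refine Finset.sum_congr rfl fun t _ => Eproc_congr (fun i hi => ?_) t
    simp [proj, hi]
  have hmg : Measurable g := fun S _ => measurableSet_pi_bool _
  have hproj : Measurable[𝓕 n] (proj n) := Measurable.of_comap_le le_rfl
  rw [hfun]
  exact (hmg.comp hproj).stronglyMeasurable

lemma measurableSet_coin (n : ℕ) : MeasurableSet {ω : ℕ → Bool | ω n = false} := by
  have he : {ω : ℕ → Bool | ω n = false} = (fun ω : ℕ → Bool => ω n) ⁻¹' {false} := rfl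
  rw [he]
  exact measurable_pi_apply n (measurableSet_singleton false)

section Measure

variable {μ : Measure (ℕ → Bool)} [IsProbabilityMeasure μ]
variable (hμ : ∀ (s : Finset ℕ) (f : ℕ → Bool),
      μ {ω | ∀ n ∈ s, ω n = f n} = (1 / 2 : ENNReal) ^ s.card)
include hμ

lemma measure_cyl (n : ℕ) (y : Fin n → Bool) :
    μ (proj n ⁻¹' {y}) = (1 / 2 : ENNReal) ^ n := by
  classical
  have h := hμ (Finset.range n) (fun i => if h : i < n then y ⟨i, h⟩ else false)
  rw [Finset.card_range] at h
  rw [← h]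
  congr 1
  ext ω
  simp only [Set.mem_preimage, Set.mem_singleton_iff, Set.mem_setOf_eq, Finset.mem_range,
    funext_iff, proj]
  constructor
  · intro h i hi
    simp only [hi, dif_pos]
    exact h ⟨i, hi⟩
  · intro h i
    have := h i i.2
    simpa [i.2] using this

lemma measure_cyl_false (n : ℕ) (y : Fin n → Bool) :
    μ (proj n ⁻¹' {y} ∩ {ω | ω n = false}) = (1 / 2 : ENNReal) ^ (n + 1) := by
  classical
  have h := hμ (Finset.range (n + 1)) (fun i => if h : i < n then y ⟨i, h⟩ else false)
  rw [Finset.card_range] at h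
  rw [← h]
  congr 1
  ext ω
  simp only [Set.mem_preimage, Set.mem_singleton_iff, Set.mem_setOf_eq, Set.mem_inter_iff,
    Finset.mem_range, funext_iff, proj]
  constructor
  · rintro ⟨h1, h2⟩ i hi
    rcases Nat.lt_succ_iff_lt_or_eq.mp hi with hi' | rfl
    · simp only [hi', dif_pos]
      exact h1 ⟨i, hi'⟩
    · simpa using h2
  · intro h
    constructor
    · intro i
      have := h i (i.2.trans n.lt_succ_self)
      simpa [i.2] using this
    · simpa using h n n.lt_succ_self


lemma measure_inter_half (n : ℕ) (s : Set (ℕ → Bool)) (hs : MeasurableSet[𝓕 n] s) :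
    μ ({ω | ω n = false} ∩ s) = (1 / 2 : ENNReal) * μ s := by
  classical
  obtain ⟨t, -, rfl⟩ := hs
  have htf : t.Finite := t.toFinite
  have hmeas : ∀ y : Fin n → Bool, MeasurableSet (proj n ⁻¹' {y}) :=
    fun y => measurable_proj n (measurableSet_pi_bool _)
  have hA : MeasurableSet {ω : ℕ → Bool | ω n = false} := by
    have he : {ω : ℕ → Bool | ω n = false} = (fun ω : ℕ → Bool => ω n) ⁻¹' {false} := rfl
    rw [he]
    exact measurable_pi_apply n (measurableSet_singleton false)
  have hdecomp : proj n ⁻¹' t = ⋃ y ∈ htf.toFinset, proj n ⁻¹' {y} := by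
    ext ω
    simp only [Set.mem_preimage, Set.mem_iUnion, Set.Finite.mem_toFinset,
      Set.mem_singleton_iff]
    exact ⟨fun h => ⟨_, h, rfl⟩, fun ⟨y, hy, h⟩ => h ▸ hy⟩
  have hdisj : (↑htf.toFinset : Set (Fin n → Bool)).PairwiseDisjoint
      (fun y => proj n ⁻¹' {y}) := by
    intro y _ z _ hyz
    refine Set.disjoint_left.mpr fun ω h1 h2 => hyz ?_
    simp only [Set.mem_preimage, Set.mem_singleton_iff] at h1 h2
    rw [← h1, ← h2]
  have h1 : μ (proj n ⁻¹' t) = htf.toFinset.card * (1 / 2 : ENNReal) ^ n := by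
    rw [hdecomp, measure_biUnion_finset hdisj (fun y _ => hmeas y)]
    simp [measure_cyl hμ n, Finset.sum_const, nsmul_eq_mul]
  have h2 : μ ({ω | ω n = false} ∩ proj n ⁻¹' t)
      = htf.toFinset.card * (1 / 2 : ENNReal) ^ (n + 1) := by
    have hd2 : {ω : ℕ → Bool | ω n = false} ∩ proj n ⁻¹' t
        = ⋃ y ∈ htf.toFinset, (proj n ⁻¹' {y} ∩ {ω | ω n = false}) := by
      ext ω
      simp only [Set.mem_inter_iff, Set.mem_setOf_eq, Set.mem_preimage, Set.mem_iUnion,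
        Set.Finite.mem_toFinset, Set.mem_singleton_iff]
      exact ⟨fun ⟨h1, h2⟩ => ⟨proj n ω, h2, rfl, h1⟩, fun ⟨y, hy, h, hf⟩ => ⟨hf, h ▸ hy⟩⟩
    rw [hd2, measure_biUnion_finset ?_ (fun y _ => (hmeas y).inter hA)]
    · simp [measure_cyl_false hμ n, Finset.sum_const, nsmul_eq_mul]
    · intro y hy z hz hyz
      exact (hdisj hy hz hyz).mono Set.inter_subset_left Set.inter_subset_left
  rw [h1, h2, pow_succ]
  ring


lemma condexp_coin (n : ℕ) :
    (fun _ => (1 / 2 : ℝ)) =ᵐ[μ]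
      μ[ Set.indicator {ω | ω n = false} (fun _ => (1 : ℝ)) | 𝓕 n ] := by
  have hA := measurableSet_coin n
  refine ae_eq_condExp_of_forall_setIntegral_eq (𝓕.le n)
    ((integrable_const (1 : ℝ)).indicator hA) (fun s _ _ => ?_) (fun s hs _ => ?_)
    (stronglyMeasurable_const.aestronglyMeasurable)
  · exact (integrableOn_const_iff).mpr (Or.inr (measure_lt_top μ s))
  · have h1 : ∫ x in s, Set.indicator {ω : ℕ → Bool | ω n = false} (fun _ => (1 : ℝ)) x ∂μ
        = ((μ.restrict s) {ω : ℕ → Bool | ω n = false}).toReal • (1 : ℝ) :=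
      integral_indicator_const (1 : ℝ) hA
    rw [h1, Measure.restrict_apply hA, measure_inter_half hμ n s hs, setIntegral_const]
    have hne : μ s ≠ ⊤ := measure_ne_top μ s
    rw [ENNReal.toReal_mul]
    simp [smul_eq_mul]
    rw [measureReal_def]
    ring


omit hμ in
lemma integrable_F (hε : ∀ r ≤ m, 0 ≤ ε r) (hsum : ∑ r ∈ Finset.range (m+1), ε r = 1)
    (k n : ℕ) (hk : k ≤ m + 1) :
    Integrable (fun ω => ∑ t ∈ Finset.range k, Eproc m ε n ω t) μ := by
  refine (integrable_const (1 : ℝ)).mono'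
    (((stronglyMeasurable_F (m := m) (ε := ε) k n).mono (𝓕.le n)).aestronglyMeasurable) ?_
  filter_upwards with ω
  rw [Real.norm_eq_abs, abs_of_nonneg (F_nonneg hε n ω k hk)]
  exact F_le_one hε hsum n ω k hk

lemma condexp_step (hε : ∀ r ≤ m, 0 ≤ ε r) (hsum : ∑ r ∈ Finset.range (m+1), ε r = 1)
    (k n : ℕ) (hk : k ≤ m + 1) :
    μ[ (fun ω => ∑ t ∈ Finset.range k, Eproc m ε (n+1) ω t) | 𝓕 n ]
      =ᵐ[μ] fun ω => ∑ t ∈ Finset.range k, Eproc m ε n ω t := by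
  set p : (ℕ → Bool) → ℝ := fun ω => ∑ t ∈ Finset.range k, Eproc m ε n ω t with hp
  have h0 : ∀ ω, 0 ≤ p ω := fun ω => F_nonneg hε n ω k hk
  have h1 : ∀ ω, p ω ≤ 1 := fun ω => F_le_one hε hsum n ω k hk
  have hA := measurableSet_coin n
  set q : (ℕ → Bool) → ℝ := fun ω => 2 * p ω - 2 * (p ω * p ω) with hq
  set iA : (ℕ → Bool) → ℝ := Set.indicator {ω : ℕ → Bool | ω n = false} (fun _ => (1 : ℝ))
    with hiA
  have hdecomp : (fun ω => ∑ t ∈ Finset.range k, Eproc m ε (n+1) ω t)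
      = p * p + q * iA := by
    funext ω
    have hF := Fstep n ω (Eproc_total hsum n ω) k hk
    by_cases hω : ω n = false
    · have hmem : ω ∈ {ω : ℕ → Bool | ω n = false} := hω
      rw [Pi.add_apply, Pi.mul_apply, Pi.mul_apply, hF, if_pos hω, hiA,
        Set.indicator_of_mem hmem]
      simp only [hq, hp]
      ring
    · have hmem : ω ∉ {ω : ℕ → Bool | ω n = false} := hω
      rw [Pi.add_apply, Pi.mul_apply, Pi.mul_apply, hF, if_neg hω, hiA,
        Set.indicator_of_notMem hmem]
      simp only [hq, hp]
      ring
  have hsmp : StronglyMeasurable[𝓕 n] p := stronglyMeasurable_F k n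
  have hsmq : StronglyMeasurable[𝓕 n] q :=
    ((stronglyMeasurable_const.mul hsmp).sub
      (stronglyMeasurable_const.mul (hsmp.mul hsmp)))
  have hintp2 : Integrable (p * p) μ := by
    refine (integrable_const (1 : ℝ)).mono'
      (((hsmp.mul hsmp).mono (𝓕.le n)).aestronglyMeasurable) ?_
    filter_upwards with ω
    rw [Pi.mul_apply, Real.norm_eq_abs, abs_of_nonneg (mul_nonneg (h0 ω) (h0 ω))]
    exact mul_le_one₀ (h1 ω) (h0 ω) (h1 ω)
  have hintiA : Integrable iA μ := (integrable_const (1 : ℝ)).indicator hA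
  have hintprod : Integrable (q * iA) μ := by
    refine (integrable_const (2 : ℝ)).mono'
      ((hsmq.mono (𝓕.le n)).aestronglyMeasurable.mul
        ((stronglyMeasurable_const.indicator hA).aestronglyMeasurable)) ?_
    filter_upwards with ω
    rw [Pi.mul_apply, norm_mul]
    have hiAb : ‖iA ω‖ ≤ 1 := by
      by_cases hω : ω n = false
      · have hmem : ω ∈ {ω : ℕ → Bool | ω n = false} := hω
        rw [hiA, Set.indicator_of_mem hmem]; simp
      · have hmem : ω ∉ {ω : ℕ → Bool | ω n = false} := hω
        rw [hiA, Set.indicator_of_notMem hmem]; simp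
    have hqb : ‖q ω‖ ≤ 2 := by
      rw [Real.norm_eq_abs, abs_le]
      simp only [hq]
      constructor <;> nlinarith [h0 ω, h1 ω]
    calc ‖q ω‖ * ‖iA ω‖ ≤ 2 * 1 :=
          mul_le_mul hqb hiAb (norm_nonneg _) (by norm_num)
      _ = 2 := by norm_num
  rw [hdecomp]
  refine (condExp_add hintp2 hintprod (𝓕 n)).trans ?_
  have hc1 : μ[p * p | 𝓕 n] = p * p :=
    condExp_of_stronglyMeasurable (𝓕.le n) (hsmp.mul hsmp) hintp2
  rw [hc1]
  have hc2 : μ[q * iA | 𝓕 n] =ᵐ[μ] q * μ[iA | 𝓕 n] :=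
    condExp_mul_of_stronglyMeasurable_left hsmq hintprod hintiA
  filter_upwards [hc2, condexp_coin hμ n] with ω e2 e3
  have e3' : (1 / 2 : ℝ) = (μ[iA | 𝓕 n]) ω := e3
  rw [Pi.add_apply, e2, Pi.mul_apply, Pi.mul_apply, ← e3']
  simp only [hq, hp]
  ring

lemma martingale_F (hε : ∀ r ≤ m, 0 ≤ ε r) (hsum : ∑ r ∈ Finset.range (m+1), ε r = 1)
    (k : ℕ) (hk : k ≤ m + 1) :
    Martingale (fun n ω => ∑ t ∈ Finset.range k, Eproc m ε n ω t) 𝓕 μ :=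
  martingale_nat (fun n => stronglyMeasurable_F k n)
    (fun n => integrable_F hε hsum k n hk)
    (fun n => (condexp_step hμ hε hsum k n hk).symm)

lemma main_k (hε : ∀ r ≤ m, 0 ≤ ε r) (hsum : ∑ r ∈ Finset.range (m+1), ε r = 1)
    (k : ℕ) (hk : k ≤ m + 1) :
    ∃ G : (ℕ → Bool) → ℝ, Measurable G ∧
      (∀ᵐ ω ∂μ, Tendsto (fun n => ∑ t ∈ Finset.range k, Eproc m ε n ω t) atTop (𝓝 (G ω))
        ∧ (G ω = 0 ∨ G ω = 1)) ∧
      ∫ ω, G ω ∂μ = ∑ t ∈ Finset.range k, ε t := by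
  set f : ℕ → (ℕ → Bool) → ℝ := fun n ω => ∑ t ∈ Finset.range k, Eproc m ε n ω t with hf
  have hmart : Martingale f 𝓕 μ := martingale_F hμ hε hsum k hk
  have hbdd : ∀ n, eLpNorm (f n) 1 μ ≤ ((1 : ℝ≥0) : ℝ≥0∞) := by
    intro n
    refine le_trans (eLpNorm_le_of_ae_bound (C := 1) ?_) ?_
    · filter_upwards with ω
      rw [Real.norm_eq_abs, abs_of_nonneg (F_nonneg hε n ω k hk)]
      exact F_le_one hε hsum n ω k hk
    · simp
  set G : (ℕ → Bool) → ℝ := 𝓕.limitProcess f μ with hG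
  have hGmeas : Measurable G :=
    (Filtration.stronglyMeasurable_limit_process' (ℱ := 𝓕) (f := f) (μ := μ)).measurable
  have htend : ∀ᵐ ω ∂μ, Tendsto (fun n => f n ω) atTop (𝓝 (G ω)) :=
    hmart.submartingale.ae_tendsto_limitProcess hbdd
  have h01 : ∀ᵐ ω ∂μ, G ω = 0 ∨ G ω = 1 := by
    filter_upwards [htend] with ω hω
    have hd1 : Tendsto (fun n => f (n+1) ω - f n ω) atTop (𝓝 (G ω - G ω)) :=
      (hω.comp (tendsto_add_atTop_nat 1)).sub hω
    have hd2 : Tendsto (fun n => |f (n+1) ω - f n ω|) atTop (𝓝 0) := by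
      simpa using hd1.abs
    have h3 : ∀ n, |f (n+1) ω - f n ω| = f n ω * (1 - f n ω) := by
      intro n
      have hF := Fstep n ω (Eproc_total hsum n ω) k hk
      have ha := F_nonneg hε n ω k hk
      have hb := F_le_one hε hsum n ω k hk
      by_cases hωn : ω n = false
      · have : f (n+1) ω - f n ω = f n ω * (1 - f n ω) := by
          simp only [hf]
          rw [hF, if_pos hωn]; ring
        rw [this, abs_of_nonneg (by nlinarith)]
      · have : f (n+1) ω - f n ω = -(f n ω * (1 - f n ω)) := by
          simp only [hf]
          rw [hF, if_neg hωn]; ring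
        rw [this, abs_neg, abs_of_nonneg (by nlinarith)]
    simp only [h3] at hd2
    have h4 : Tendsto (fun n => f n ω * (1 - f n ω)) atTop (𝓝 (G ω * (1 - G ω))) :=
      hω.mul (tendsto_const_nhds.sub hω)
    have h5 : G ω * (1 - G ω) = 0 := tendsto_nhds_unique h4 hd2
    rcases mul_eq_zero.mp h5 with h | h
    · exact Or.inl h
    · exact Or.inr (by linarith)
  refine ⟨G, hGmeas, ?_, ?_⟩
  · filter_upwards [htend, h01] with ω h1 h2 using ⟨h1, h2⟩
  · have hconst : ∀ n, ∫ ω, f n ω ∂μ = ∑ t ∈ Finset.range k, ε t := by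
      intro n
      induction n with
      | zero =>
        have he : f 0 = fun _ => ∑ t ∈ Finset.range k, ε t := rfl
        rw [he, integral_const]
        simp
      | succ n ih =>
        have h1 : ∫ ω, f (n+1) ω ∂μ = ∫ ω, (μ[f (n+1) | 𝓕 n]) ω ∂μ :=
          (integral_condExp (𝓕.le n)).symm
        rw [h1, integral_congr_ae (condexp_step hμ hε hsum k n hk)]
        exact ih
    have hlim : Tendsto (fun n => ∫ ω, f n ω ∂μ) atTop (𝓝 (∫ ω, G ω ∂μ)) := by
      refine tendsto_integral_of_dominated_convergence (fun _ => (1 : ℝ))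
        (fun n => ((stronglyMeasurable_F k n).mono (𝓕.le n)).aestronglyMeasurable)
        (integrable_const 1) (fun n => ?_) htend
      filter_upwards with ω
      rw [Real.norm_eq_abs, abs_of_nonneg (F_nonneg hε n ω k hk)]
      exact F_le_one hε hsum n ω k hk
    have hlim2 : Tendsto (fun _ : ℕ => ∑ t ∈ Finset.range k, ε t) atTop
        (𝓝 (∫ ω, G ω ∂μ)) := by
      simpa only [hconst] using hlim
    exact (tendsto_nhds_unique tendsto_const_nhds hlim2).symm

end Measure

end Stmt17

/-- Under the fair-coin product measure `μ` on `Ω = ℕ → Bool` (characterized by its values on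
cylinder sets), for each `0 ≤ r ≤ m` the sequence `(E_{r,n})_n` converges `μ`-almost surely
to a `{0,1}`-valued random variable `E_{r,∞}` with `μ(E_{r,∞} = 1) = ε_r`, hence
`μ(E_{r,∞} = 0) = 1 − ε_r`. -/
theorem stmt_17 (p m : ℕ) (hp : p.Prime) (hm : 1 ≤ m)
    (ε : ℕ → ℝ) (hε : ∀ r ≤ m, 0 ≤ ε r) (hsum : ∑ r ∈ Finset.range (m + 1), ε r = 1)
    (μ : Measure (ℕ → Bool)) [IsProbabilityMeasure μ]
    (hμ : ∀ (s : Finset ℕ) (f : ℕ → Bool),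
      μ {ω | ∀ n ∈ s, ω n = f n} = (1 / 2 : ENNReal) ^ s.card) :
    ∀ r ≤ m, ∃ Einf : (ℕ → Bool) → ℝ,
      (∀ᵐ ω ∂μ,
        Tendsto (fun n => Eproc m ε n ω r) atTop (nhds (Einf ω)) ∧ (Einf ω = 0 ∨ Einf ω = 1))
      ∧ μ {ω | Einf ω = 1} = ENNReal.ofReal (ε r)
      ∧ μ {ω | Einf ω = 0} = ENNReal.ofReal (1 - ε r) := by

  intro r hr
  obtain ⟨G1, hG1meas, hG1ae, hG1int⟩ := Stmt17.main_k hμ hε hsum r (by omega)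
  obtain ⟨G2, hG2meas, hG2ae, hG2int⟩ := Stmt17.main_k hμ hε hsum (r + 1) (by omega)
  set Einf : (ℕ → Bool) → ℝ := fun ω => G2 ω - G1 ω with hEinf
  have hmeas : Measurable Einf := hG2meas.sub hG1meas
  -- the a.e. statement
  have hae : ∀ᵐ ω ∂μ,
      Tendsto (fun n => Eproc m ε n ω r) atTop (nhds (Einf ω))
        ∧ (Einf ω = 0 ∨ Einf ω = 1) := by
    filter_upwards [hG1ae, hG2ae] with ω h1 h2
    have htend : Tendsto (fun n => Eproc m ε n ω r) atTop (nhds (Einf ω)) := by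
      have he : (fun n => Eproc m ε n ω r)
          = fun n => (∑ t ∈ Finset.range (r + 1), Eproc m ε n ω t)
              - ∑ t ∈ Finset.range r, Eproc m ε n ω t := by
        funext n
        rw [Finset.sum_range_succ]
        ring
      rw [he]
      exact h2.1.sub h1.1
    have hle : G1 ω ≤ G2 ω := by
      refine le_of_tendsto_of_tendsto' h1.1 h2.1 fun n => ?_
      rw [Finset.sum_range_succ]
      have := Stmt17.Eproc_nonneg hε n ω r hr
      linarith
    refine ⟨htend, ?_⟩
    rcases h1.2 with e1 | e1 <;> rcases h2.2 with e2 | e2 <;>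
      simp only [hEinf, e1, e2] <;> norm_num
    rw [e1, e2] at hle
    linarith
  -- values and integrability
  have haev : ∀ᵐ ω ∂μ, Einf ω = 0 ∨ Einf ω = 1 := by
    filter_upwards [hae] with ω h using h.2
  have hεr1 : ε r ≤ 1 := by
    rw [← hsum]
    refine Finset.single_le_sum (fun i hi => hε i ?_) (Finset.mem_range.mpr (by omega))
    exact Nat.lt_succ_iff.mp (Finset.mem_range.mp hi)
  have hbound : ∀ G : (ℕ → Bool) → ℝ, Measurable G →
      (∀ᵐ ω ∂μ, G ω = 0 ∨ G ω = 1) → Integrable G μ := by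
    intro G hGm hGv
    refine (integrable_const (1 : ℝ)).mono' hGm.aestronglyMeasurable ?_
    filter_upwards [hGv] with ω h
    rcases h with h | h <;> simp [h]
  have hintG1 : Integrable G1 μ := hbound G1 hG1meas (by
    filter_upwards [hG1ae] with ω h using h.2)
  have hintG2 : Integrable G2 μ := hbound G2 hG2meas (by
    filter_upwards [hG2ae] with ω h using h.2)
  have hintE : ∫ ω, Einf ω ∂μ = ε r := by
    have : ∫ ω, Einf ω ∂μ = (∫ ω, G2 ω ∂μ) - ∫ ω, G1 ω ∂μ := integral_sub hintG2 hintG1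
    rw [this, hG1int, hG2int, Finset.sum_range_succ]
    ring
  have hA1 : MeasurableSet {ω | Einf ω = 1} := hmeas (measurableSet_singleton 1)
  have hA0 : MeasurableSet {ω | Einf ω = 0} := hmeas (measurableSet_singleton 0)
  have hind : Einf =ᵐ[μ] Set.indicator {ω | Einf ω = 1} (fun _ => (1 : ℝ)) := by
    filter_upwards [haev] with ω h
    rcases h with h | h
    · rw [h, Set.indicator_of_notMem]
      simp only [Set.mem_setOf_eq, h]
      norm_num
    · rw [h, Set.indicator_of_mem]
      exact h
  have hμA1 : μ {ω | Einf ω = 1} = ENNReal.ofReal (ε r) := by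
    have h1 : ∫ ω, Einf ω ∂μ
        = ∫ ω, Set.indicator {ω | Einf ω = 1} (fun _ => (1 : ℝ)) ω ∂μ :=
      integral_congr_ae hind
    rw [integral_indicator_const (1 : ℝ) hA1] at h1
    rw [hintE] at h1
    rw [smul_eq_mul, mul_one] at h1
    rw [← ENNReal.ofReal_toReal (measure_ne_top μ {ω | Einf ω = 1}), ← measureReal_def, ← h1]
  have hμA0 : μ {ω | Einf ω = 0} = ENNReal.ofReal (1 - ε r) := by
    have hdisj : Disjoint {ω | Einf ω = 0} {ω | Einf ω = 1} := by
      refine Set.disjoint_left.mpr fun ω h0 h1 => ?_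
      simp only [Set.mem_setOf_eq] at h0 h1
      rw [h0] at h1
      norm_num at h1
    have hcompl : μ ({ω | Einf ω = 0} ∪ {ω | Einf ω = 1})ᶜ = 0 := by
      have hsub : ({ω | Einf ω = 0} ∪ {ω | Einf ω = 1})ᶜ
          ⊆ {ω | ¬(Einf ω = 0 ∨ Einf ω = 1)} := by
        intro ω hω
        simp only [Set.mem_compl_iff, Set.mem_union, Set.mem_setOf_eq] at hω ⊢
        exact hω
      exact measure_mono_null hsub (ae_iff.mp haev)
    have hunion : μ ({ω | Einf ω = 0} ∪ {ω | Einf ω = 1}) = 1 := by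
      have h := measure_add_measure_compl (μ := μ) (hA0.union hA1)
      rw [hcompl, add_zero, measure_univ] at h
      exact h
    rw [measure_union hdisj hA1, hμA1] at hunion
    have hsubres : μ {ω | Einf ω = 0} = 1 - ENNReal.ofReal (ε r) :=
      ENNReal.eq_sub_of_add_eq ENNReal.ofReal_ne_top hunion
    rw [hsubres, ENNReal.ofReal_sub 1 (hε r hr), ENNReal.ofReal_one]
  exact ⟨Einf, hae, hμA1, hμA0⟩
end
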